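/- arXiv:1908.03045 — 3 statements merged into one kernel-verified Lean document; each statement's English description precedes it below -/
import Mathlib

section
/- For each 1 ≤ i ≤ n let ≺_i be an elimination order with respect to the variable x_i on the monomials of ℚ[x_1,…,x_n]. If a finite point set 𝒱 ⊆ {0,1,…,k−1}^n is not extremal, then there exist indices i ≠ j among 1,…,n such that the standard monomials of I(𝒱) with respect to ≺_i differ from the standard monomials of I(𝒱) with respect to ≺_j. Equivalently: if Sm(I(𝒱)) is the same for all of ≺_1,…,≺_n, then 𝒱 is extremal. -/
open MvPolynomial

/-- Monomials of `𝔽[x_1,…,x_n]` identified with their exponent vectors. -/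
abbrev Mon (n : ℕ) := Fin n →₀ ℕ

/-- A linear order on monomials is a term order if `1` (i.e. the zero exponent
vector) is minimal and the order is compatible with multiplication by monomials. -/
def IsTermOrder {n : ℕ} (lin : LinearOrder (Mon n)) : Prop :=
  (∀ u : Mon n, lin.le 0 u) ∧
    ∀ u v w : Mon n, lin.le u v → lin.le (u + w) (v + w)

/-- The strict lexicographic comparison of exponent vectors induced by the variable
ordering `x_{σ 0} ≻ x_{σ 1} ≻ ⋯ ≻ x_{σ (n-1)}`. -/
def lexLt {n : ℕ} (σ : Equiv.Perm (Fin n)) (u v : Mon n) : Prop :=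
  ∃ j : Fin n, u (σ j) < v (σ j) ∧ ∀ i : Fin n, i < j → u (σ i) = v (σ i)

/-- `lin` is the lexicographic term order induced by the variable ordering
`x_{σ 0} ≻ x_{σ 1} ≻ ⋯ ≻ x_{σ (n-1)}`. -/
def IsLexOrder {n : ℕ} (σ : Equiv.Perm (Fin n)) (lin : LinearOrder (Mon n)) : Prop :=
  ∀ u v : Mon n, lin.lt u v ↔ lexLt σ u v

/-- `m` is the leading monomial of `f` with respect to the monomial order `lin`. -/
def IsLeadMon {n : ℕ} {F : Type*} [CommSemiring F] (lin : LinearOrder (Mon n))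
    (f : MvPolynomial (Fin n) F) (m : Mon n) : Prop :=
  m ∈ f.support ∧ ∀ m' ∈ f.support, lin.le m' m

/-- The set of standard monomials of an ideal `I` with respect to the monomial
order `lin`: monomials that are not the leading monomial of any nonzero `f ∈ I`. -/
def stdMon {n : ℕ} {F : Type*} [CommSemiring F] (lin : LinearOrder (Mon n))
    (I : Ideal (MvPolynomial (Fin n) F)) : Set (Mon n) :=
  { m | ¬ ∃ f ∈ I, f ≠ 0 ∧ IsLeadMon lin f m }

/-- The vanishing ideal of a point set `V ⊆ F^n`. -/
def vanishIdeal {n : ℕ} {F : Type*} [CommRing F] (V : Set (Fin n → F)) :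
    Ideal (MvPolynomial (Fin n) F) where
  carrier := { f | ∀ v ∈ V, MvPolynomial.eval v f = 0 }
  add_mem' := by
    intro a b ha hb v hv
    simp [map_add, ha v hv, hb v hv]
  zero_mem' := by intro v hv; simp
  smul_mem' := by
    intro c f hf v hv
    simp [smul_eq_mul, hf v hv]

/-- A finite point set (in `{0,…,k-1}^n`, over any field) is extremal if its vanishing
ideal has the same standard monomials for every lexicographic term order. -/
def IsExtremal {n : ℕ} {F : Type*} [CommRing F] (V : Set (Fin n → F)) : Prop :=
  ∀ (σ₁ σ₂ : Equiv.Perm (Fin n)) (lin₁ lin₂ : LinearOrder (Mon n)),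
    IsLexOrder σ₁ lin₁ → IsLexOrder σ₂ lin₂ →
      stdMon lin₁ (vanishIdeal V) = stdMon lin₂ (vanishIdeal V)

/-- Embedding of a point of `{0,…,k-1}^n` into `F^n`. -/
def toField {n k : ℕ} (F : Type*) [Field F] (w : Fin n → Fin k) : Fin n → F :=
  fun i => ((w i : ℕ) : F)

/-- Identification of a point of `{0,…,k-1}^n` with an exponent vector in `ℕ^n`. -/
noncomputable def toExp {n k : ℕ} (w : Fin n → Fin k) : Mon n :=
  Finsupp.equivFunOnFinite.symm fun i => (w i : ℕ)

/-- The downshift `D_i(V)` of `V ⊆ {0,…,k-1}^n` at coordinate `i`: its `i`-section at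
each choice of the other coordinates is `{0,1,…,m-1}` where `m` is the size of the
corresponding `i`-section of `V`. -/
def downshift {n k : ℕ} (V : Finset (Fin n → Fin k)) (i : Fin n) :
    Finset (Fin n → Fin k) :=
  Finset.univ.filter fun w =>
    (w i : ℕ) < (Finset.univ.filter fun α : Fin k => Function.update w i α ∈ V).card

/-- The iterated downshift `D_{σ(n-1)}(D_{σ(n-2)}(⋯(D_{σ 0}(V))))`,
i.e. downshifts are applied at coordinates `σ 0, σ 1, …, σ (n-1)` in this order. -/
def iterDownshift {n k : ℕ} (σ : Equiv.Perm (Fin n)) (V : Finset (Fin n → Fin k)) :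
    Finset (Fin n → Fin k) :=
  (List.ofFn fun j : Fin n => σ j).foldl downshift V

/-- A polynomial is degree dominated (with dominating term `x^w`) if it equals
`x^w + Σ αᵢ x^{vᵢ}` where each `x^{vᵢ}` divides `x^w`. -/
def IsDegDominated {n : ℕ} {F : Type*} [CommSemiring F]
    (f : MvPolynomial (Fin n) F) : Prop :=
  ∃ w : Mon n, MvPolynomial.coeff w f = 1 ∧ ∀ v ∈ f.support, v ≤ w

/-- `G` is a Gröbner basis of `I` with respect to the monomial order `lin`:
`G ⊆ I` and for every nonzero `f ∈ I` some `g ∈ G` has leading monomial dividing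
the leading monomial of `f` (divisibility of monomials being `≤` of exponents). -/
def IsGroebner {n : ℕ} {F : Type*} [CommSemiring F] (lin : LinearOrder (Mon n))
    (G : Finset (MvPolynomial (Fin n) F)) (I : Ideal (MvPolynomial (Fin n) F)) : Prop :=
  (∀ g ∈ G, g ∈ I) ∧
    ∀ f ∈ I, f ≠ 0 → ∀ m : Mon n, IsLeadMon lin f m →
      ∃ g ∈ G, ∃ mg : Mon n, IsLeadMon lin g mg ∧ mg ≤ m

/-- `G` is a universal Gröbner basis of `I` if it is a Gröbner basis for every term order. -/
def IsUnivGroebner {n : ℕ} {F : Type*} [CommSemiring F]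
    (G : Finset (MvPolynomial (Fin n) F)) (I : Ideal (MvPolynomial (Fin n) F)) : Prop :=
  ∀ lin : LinearOrder (Mon n), IsTermOrder lin → IsGroebner lin G I

/-- A term order is an elimination order with respect to `x_i` if `x_i` is greater
than every monomial not involving `x_i`. -/
def IsElimOrder {n : ℕ} (lin : LinearOrder (Mon n)) (i : Fin n) : Prop :=
  IsTermOrder lin ∧ ∀ m : Mon n, m i = 0 → lin.lt m (Finsupp.single i 1)

/-- A set system `𝓕` shatters `S` if every subset of `S` is the intersection of `S`
with a member of `𝓕`. -/
def Shatters {n : ℕ} (𝓕 : Finset (Finset (Fin n))) (S : Finset (Fin n)) : Prop :=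
  ∀ T ⊆ S, ∃ Fm ∈ 𝓕, Fm ∩ S = T

open scoped Classical in
/-- The family `Sh(𝓕)` of sets shattered by `𝓕`. -/
noncomputable def shatteredFamily {n : ℕ} (𝓕 : Finset (Finset (Fin n))) :
    Finset (Finset (Fin n)) :=
  Finset.univ.filter fun S => Shatters 𝓕 S

/-- A set system is shattering-extremal if it shatters exactly `|𝓕|` sets. -/
def IsSExtremal {n : ℕ} (𝓕 : Finset (Finset (Fin n))) : Prop :=
  (shatteredFamily 𝓕).card = 𝓕.card

/-- The characteristic vector of a set, as a point of `F^n`. -/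
def charVec {n : ℕ} (F : Type*) [Field F] (Fm : Finset (Fin n)) : Fin n → F :=
  fun i => if i ∈ Fm then 1 else 0

/-- The squarefree monomial `∏_{i ∈ S} x_i` associated to a set `S ⊆ [n]`,
as an exponent vector. -/
noncomputable def setMon {n : ℕ} (S : Finset (Fin n)) : Mon n :=
  Finsupp.equivFunOnFinite.symm fun i => if i ∈ S then 1 else 0

/-- The polynomial `f_{S,H} = (∏_{i∈H} x_i) ⬝ ∏_{i∈S∖H} (x_i - 1)`. -/
noncomputable def fSH {n : ℕ} (F : Type*) [Field F] (S H : Finset (Fin n)) :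
    MvPolynomial (Fin n) F :=
  (∏ i ∈ H, X i) * ∏ i ∈ S \ H, (X i - 1)

/-- The downshift `D_i(𝓕)` of a set system. -/
def dshiftSet {n : ℕ} (𝓕 : Finset (Finset (Fin n))) (i : Fin n) :
    Finset (Finset (Fin n)) :=
  𝓕.image (fun Fm => Fm.erase i) ∪ 𝓕.filter fun Fm => i ∈ Fm ∧ Fm.erase i ∈ 𝓕

/-- The iterated downshift `D_{σ(n-1)}(⋯(D_{σ 0}(𝓕)))` of a set system:
downshifts are applied at `σ 0, σ 1, …, σ (n-1)` in this order. -/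
def iterDshiftSet {n : ℕ} (σ : Equiv.Perm (Fin n)) (𝓕 : Finset (Finset (Fin n))) :
    Finset (Finset (Fin n)) :=
  (List.ofFn fun j : Fin n => σ j).foldl dshiftSet 𝓕

/-- Restriction of an exponent vector in `ℕ^{n+1}` to its first `n` coordinates. -/
noncomputable def restrictMon {n : ℕ} (w : Mon (n + 1)) : Mon n :=
  Finsupp.equivFunOnFinite.symm fun i => w i.castSucc
namespace NEDO

variable {n : ℕ}

/-! ### Linear order field API -/

theorem tlt_iff (lin : LinearOrder (Mon n)) {a b : Mon n} :
    lin.lt a b ↔ lin.le a b ∧ ¬ lin.le b a := lin.lt_iff_le_not_ge a b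

theorem tle_of_lt (lin : LinearOrder (Mon n)) {a b : Mon n} (h : lin.lt a b) : lin.le a b :=
  ((tlt_iff lin).1 h).1

theorem tlt_of_le_of_ne (lin : LinearOrder (Mon n)) {a b : Mon n}
    (h : lin.le a b) (hne : a ≠ b) : lin.lt a b :=
  (tlt_iff lin).2 ⟨h, fun h' => hne (lin.le_antisymm _ _ h h')⟩

theorem tlt_irrefl (lin : LinearOrder (Mon n)) {a : Mon n} : ¬ lin.lt a a := by
  rw [tlt_iff]; tauto

theorem tlt_ne (lin : LinearOrder (Mon n)) {a b : Mon n} (h : lin.lt a b) : a ≠ b := by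
  rintro rfl; exact tlt_irrefl lin h

theorem tlt_asymm (lin : LinearOrder (Mon n)) {a b : Mon n}
    (h : lin.lt a b) : ¬ lin.lt b a := by
  rw [tlt_iff] at h ⊢; tauto

theorem tlt_of_le_of_lt (lin : LinearOrder (Mon n)) {a b c : Mon n}
    (h : lin.le a b) (h' : lin.lt b c) : lin.lt a c := by
  rw [tlt_iff] at h' ⊢
  exact ⟨lin.le_trans _ _ _ h h'.1, fun hc => h'.2 (lin.le_trans _ _ _ hc h)⟩

theorem tlt_of_lt_of_le (lin : LinearOrder (Mon n)) {a b c : Mon n}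
    (h : lin.lt a b) (h' : lin.le b c) : lin.lt a c := by
  rw [tlt_iff] at h ⊢
  exact ⟨lin.le_trans _ _ _ h.1 h', fun hc => h.2 (lin.le_trans _ _ _ h' hc)⟩

theorem tlt_trans (lin : LinearOrder (Mon n)) {a b c : Mon n}
    (h : lin.lt a b) (h' : lin.lt b c) : lin.lt a c :=
  tlt_of_lt_of_le lin h (tle_of_lt lin h')

theorem tlt_trichotomy (lin : LinearOrder (Mon n)) (a b : Mon n) :
    lin.lt a b ∨ a = b ∨ lin.lt b a := by
  rcases lin.le_total a b with h | h
  · by_cases hab : a = b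
    · exact Or.inr (Or.inl hab)
    · exact Or.inl (tlt_of_le_of_ne lin h hab)
  · by_cases hab : a = b
    · exact Or.inr (Or.inl hab)
    · exact Or.inr (Or.inr (tlt_of_le_of_ne lin h (Ne.symm hab)))

theorem not_tlt (lin : LinearOrder (Mon n)) {a b : Mon n} (h : ¬ lin.lt a b) : lin.le b a := by
  rcases lin.le_total b a with h' | h'
  · exact h'
  · rcases eq_or_ne a b with rfl | hne
    · exact lin.le_refl a
    · exact absurd (tlt_of_le_of_ne lin h' hne) h

/-! ### Term order lemmas -/

theorem term_add_le (lin : LinearOrder (Mon n)) (h : IsTermOrder lin) {u v : Mon n}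
    (w : Mon n) (huv : lin.le u v) : lin.le (u + w) (v + w) := h.2 u v w huv

theorem term_add_lt (lin : LinearOrder (Mon n)) (h : IsTermOrder lin) {u v : Mon n}
    (w : Mon n) (huv : lin.lt u v) : lin.lt (u + w) (v + w) := by
  refine tlt_of_le_of_ne lin (term_add_le lin h w (tle_of_lt lin huv)) ?_
  intro hc
  exact tlt_ne lin huv (by exact add_right_cancel hc)

theorem term_add_lt_cancel (lin : LinearOrder (Mon n)) (h : IsTermOrder lin) {u v w : Mon n}
    (huv : lin.lt (u + w) (v + w)) : lin.lt u v := by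
  rcases tlt_trichotomy lin u v with h' | rfl | h'
  · exact h'
  · exact absurd huv (tlt_irrefl lin)
  · exact absurd (term_add_lt lin h w h') (tlt_asymm lin huv)

/-- Pointwise domination implies term-order `le`. -/
theorem term_mono (lin : LinearOrder (Mon n)) (h : IsTermOrder lin) {u v : Mon n}
    (huv : u ≤ v) : lin.le u v := by
  have hv : v - u + u = v := tsub_add_cancel_of_le huv
  have := term_add_le lin h (w := u) (h.1 (v - u))
  rwa [zero_add, hv] at this

/-- Term orders are well-founded (Dickson's lemma). -/
theorem term_wf (lin : LinearOrder (Mon n)) (h : IsTermOrder lin) :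
    WellFounded lin.lt := by
  haveI : IsTrans (Mon n) lin.lt := ⟨fun _ _ _ => tlt_trans lin⟩
  haveI : IsIrrefl (Mon n) lin.lt := ⟨fun _ => tlt_irrefl lin⟩
  rw [RelEmbedding.wellFounded_iff_isEmpty]
  constructor
  intro f
  obtain ⟨m, k, hmk, hle⟩ := (Set.isPWO_of_wellQuasiOrderedLE (Set.univ : Set (Mon n))).exists_lt (f := f) (fun _ => Set.mem_univ _)
  have h1 : lin.le (f m) (f k) := term_mono lin h hle
  have h2 : lin.lt (f k) (f m) := f.map_rel_iff.2 hmk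
  exact ((tlt_iff lin).1 h2).2 h1

/-! ### Graded orders -/

/-- The set of monomials supported on `A`. -/
def MS (A : Finset (Fin n)) : Set (Mon n) := {m | ∀ j, j ∉ A → m j = 0}

theorem MS_univ : (MS (Finset.univ : Finset (Fin n))) = Set.univ := by
  ext m; simp [MS]

theorem MS_mono {A B : Finset (Fin n)} (h : A ⊆ B) : MS A ⊆ MS B := by
  intro m hm j hj
  exact hm j (fun hc => hj (h hc))

theorem MS_add {A : Finset (Fin n)} {u v : Mon n} (hu : u ∈ MS A) (hv : v ∈ MS A) :
    u + v ∈ MS A := by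
  intro j hj
  simp [Finsupp.add_apply, hu j hj, hv j hj]

theorem MS_single {A : Finset (Fin n)} {i : Fin n} (hi : i ∈ A) (d : ℕ) :
    (Finsupp.single i d : Mon n) ∈ MS A := by
  intro j hj
  rw [Finsupp.single_apply, if_neg]
  rintro rfl; exact hj hi

theorem MS_erase_mem {A : Finset (Fin n)} {i : Fin n} {m : Mon n} (hm : m ∈ MS A) :
    Finsupp.erase i m ∈ MS (A.erase i) := by
  intro j hj
  rcases eq_or_ne j i with rfl | hne
  · simp
  · rw [Finsupp.erase_ne hne]
    exact hm j (fun hc => hj (Finset.mem_erase.2 ⟨hne, hc⟩))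

/-- `lin` is graded in direction `i` on monomials supported on `A`. -/
def GradedOn (A : Finset (Fin n)) (i : Fin n) (lin : LinearOrder (Mon n)) : Prop :=
  ∀ u v : Mon n, u ∈ MS A → v ∈ MS A → u i < v i → lin.lt u v

theorem gradedOn_le_of_lt {A : Finset (Fin n)} {i : Fin n} {lin : LinearOrder (Mon n)}
    (hg : GradedOn A i lin) {u v : Mon n} (hu : u ∈ MS A) (hv : v ∈ MS A)
    (huv : lin.lt u v) : u i ≤ v i := by
  by_contra hc
  exact tlt_asymm lin huv (hg v u hv hu (by omega))

/-- Elimination orders are (globally) graded in their variable. -/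
theorem elim_graded {lin : LinearOrder (Mon n)} {i : Fin n} (h : IsElimOrder lin i)
    {u v : Mon n} (hlt : u i < v i) : lin.lt u v := by
  obtain ⟨ht, helim⟩ := h
  set a := u i with ha
  set b := v i with hb
  have h1 : lin.lt (Finsupp.erase i u) (Finsupp.single i 1) :=
    helim _ (Finsupp.erase_same)
  have h2 : lin.le (Finsupp.single i 1) (Finsupp.single i 1 + Finsupp.erase i v) :=
    term_mono lin ht (le_add_right (le_refl _))
  have h3 : lin.lt (Finsupp.erase i u) (Finsupp.single i 1 + Finsupp.erase i v) :=
    tlt_of_lt_of_le lin h1 h2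
  have h4 : lin.lt (Finsupp.erase i u + Finsupp.single i a)
      (Finsupp.single i 1 + Finsupp.erase i v + Finsupp.single i a) :=
    term_add_lt lin ht _ h3
  have e1 : Finsupp.single i 1 + Finsupp.erase i v + Finsupp.single i a
      = Finsupp.erase i v + Finsupp.single i (a + 1) := by
    rw [Finsupp.single_add]
    abel
  rw [e1] at h4
  have h5 : lin.le (Finsupp.erase i v + Finsupp.single i (a + 1))
      (Finsupp.erase i v + Finsupp.single i b) := by
    refine term_mono lin ht (add_le_add_right ?_ _)
    intro j
    rcases eq_or_ne j i with rfl | hne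
    · simpa using hlt
    · simp [Finsupp.single_apply, Ne.symm hne]
  have h6 := tlt_of_lt_of_le lin h4 h5
  rwa [Finsupp.erase_add_single, Finsupp.erase_add_single] at h6

end NEDO
namespace NEDO

variable {n : ℕ}

/-! ### The `i`-graded refinement of an order -/

noncomputable def refine (lin : LinearOrder (Mon n)) (i : Fin n) : LinearOrder (Mon n) where
  le u v := u i < v i ∨ (u i = v i ∧ lin.le u v)
  lt u v := u i < v i ∨ (u i = v i ∧ lin.lt u v)
  le_refl u := Or.inr ⟨rfl, lin.le_refl u⟩
  le_trans u v w huv hvw := by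
    rcases huv with h1 | ⟨e1, h1⟩ <;> rcases hvw with h2 | ⟨e2, h2⟩
    · exact Or.inl (h1.trans h2)
    · exact Or.inl (by omega)
    · exact Or.inl (by omega)
    · exact Or.inr ⟨e1.trans e2, lin.le_trans _ _ _ h1 h2⟩
  le_antisymm u v huv hvu := by
    rcases huv with h1 | ⟨e1, h1⟩
    · rcases hvu with h2 | ⟨e2, h2⟩
      · exact absurd (h1.trans h2) (lt_irrefl _)
      · exact absurd h1 (by omega)
    · rcases hvu with h2 | ⟨e2, h2⟩
      · exact absurd h2 (by omega)
      · exact lin.le_antisymm _ _ h1 h2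
  le_total u v := by
    rcases Nat.lt_trichotomy (u i) (v i) with h | h | h
    · exact Or.inl (Or.inl h)
    · rcases lin.le_total u v with h' | h'
      · exact Or.inl (Or.inr ⟨h, h'⟩)
      · exact Or.inr (Or.inr ⟨h.symm, h'⟩)
    · exact Or.inr (Or.inl h)
  lt_iff_le_not_ge u v := by
    constructor
    · rintro (h | ⟨e, h⟩)
      · exact ⟨Or.inl h, by rintro (h' | ⟨e', h'⟩) <;> omega⟩
      · refine ⟨Or.inr ⟨e, tle_of_lt lin h⟩, ?_⟩
        rintro (h' | ⟨e', h'⟩)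
        · omega
        · exact ((tlt_iff lin).1 h).2 h'
    · rintro ⟨h1 | ⟨e1, h1⟩, h2⟩
      · exact Or.inl h1
      · refine Or.inr ⟨e1, tlt_of_le_of_ne lin h1 ?_⟩
        rintro rfl
        exact h2 (Or.inr ⟨rfl, lin.le_refl _⟩)
  toDecidableLE := fun _ _ => Classical.dec _
  toDecidableLT := fun _ _ => Classical.dec _
  toDecidableEq := fun _ _ => Classical.dec _
  min u v := @ite _ (u i < v i ∨ (u i = v i ∧ lin.le u v)) (Classical.dec _) u v
  max u v := @ite _ (u i < v i ∨ (u i = v i ∧ lin.le u v)) (Classical.dec _) v u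
  compare u v := @ite _ (u i < v i ∨ (u i = v i ∧ lin.lt u v)) (Classical.dec _) Ordering.lt
    (@ite _ (u = v) (Classical.dec _) Ordering.eq Ordering.gt)

theorem refine_lt {lin : LinearOrder (Mon n)} {i : Fin n} {u v : Mon n} :
    (refine lin i).lt u v ↔ (u i < v i ∨ (u i = v i ∧ lin.lt u v)) := Iff.rfl

theorem refine_term {lin : LinearOrder (Mon n)} {i : Fin n} (h : IsTermOrder lin) :
    IsTermOrder (refine lin i) := by
  constructor
  · intro u
    rcases Nat.eq_zero_or_pos (u i) with h0 | h0
    · exact Or.inr ⟨by simp [h0], h.1 u⟩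
    · exact Or.inl (by simpa using h0)
  · intro u v w huv
    rcases huv with h1 | ⟨e1, h1⟩
    · exact Or.inl (by simp only [Finsupp.add_apply]; omega)
    · exact Or.inr ⟨by simp only [Finsupp.add_apply]; omega, h.2 u v w h1⟩

theorem refine_graded {lin : LinearOrder (Mon n)} {i : Fin n} {A : Finset (Fin n)} :
    GradedOn A i (refine lin i) := fun _ _ _ _ h => Or.inl h

/-! ### Evaluation vectors -/

noncomputable def pev (𝒱 : Finset (Fin n → ℚ)) :
    MvPolynomial (Fin n) ℚ →ₗ[ℚ] ({x // x ∈ 𝒱} → ℚ) where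
  toFun f := fun v => MvPolynomial.eval v.1 f
  map_add' f g := by funext v; simp
  map_smul' c f := by funext v; simp

noncomputable def phi (𝒱 : Finset (Fin n → ℚ)) (m : Mon n) : {x // x ∈ 𝒱} → ℚ :=
  pev 𝒱 (MvPolynomial.monomial m 1)

theorem pev_mem_span (𝒱 : Finset (Fin n → ℚ)) {f : MvPolynomial (Fin n) ℚ} {S : Set (Mon n)}
    (hs : ↑f.support ⊆ S) : pev 𝒱 f ∈ Submodule.span ℚ (phi 𝒱 '' S) := by
  rw [f.as_sum, map_sum]
  refine Submodule.sum_mem _ ?_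
  intro m hm
  have e : MvPolynomial.monomial m (MvPolynomial.coeff m f)
      = (MvPolynomial.coeff m f) • MvPolynomial.monomial m (1:ℚ) := by
    rw [MvPolynomial.smul_monomial, smul_eq_mul, mul_one]
  rw [e, map_smul]
  exact Submodule.smul_mem _ _ (Submodule.subset_span ⟨m, hs hm, rfl⟩)

/-! ### Greedy standard monomial sets -/

def greedy (lin : LinearOrder (Mon n)) (𝒱 : Finset (Fin n → ℚ)) (R : Set (Mon n)) :
    Set (Mon n) :=
  {m | m ∈ R ∧ phi 𝒱 m ∉ Submodule.span ℚ (phi 𝒱 '' {r | r ∈ R ∧ lin.lt r m})}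

theorem mem_vanishIdeal {V : Set (Fin n → ℚ)} {f : MvPolynomial (Fin n) ℚ} :
    f ∈ vanishIdeal V ↔ ∀ v ∈ V, MvPolynomial.eval v f = 0 := Iff.rfl

theorem exists_lead_iff_mem_span (lin : LinearOrder (Mon n)) (𝒱 : Finset (Fin n → ℚ))
    (m : Mon n) :
    (∃ f ∈ vanishIdeal (𝒱 : Set (Fin n → ℚ)), f ≠ 0 ∧ IsLeadMon lin f m) ↔
      phi 𝒱 m ∈ Submodule.span ℚ (phi 𝒱 '' {r | r ∈ (Set.univ : Set (Mon n)) ∧ lin.lt r m}) := by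
  constructor
  · rintro ⟨f, hfI, hf0, hm, hlead⟩
    have hc : MvPolynomial.coeff m f ≠ 0 := by
      simpa [MvPolynomial.mem_support_iff] using hm
    set c := MvPolynomial.coeff m f with hcdef
    set g := f - MvPolynomial.monomial m c with hgdef
    have hsupp : ↑g.support ⊆ {r | r ∈ (Set.univ : Set (Mon n)) ∧ lin.lt r m} := by
      intro r hr
      simp only [Finset.coe_sort_coe, Finset.mem_coe, MvPolynomial.mem_support_iff] at hr
      rcases eq_or_ne r m with rfl | hne
      · exfalso
        apply hr
        simp [hgdef, MvPolynomial.coeff_monomial, hcdef]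
      · have hrf : r ∈ f.support := by
          rw [MvPolynomial.mem_support_iff]
          intro h0
          apply hr
          simp [hgdef, MvPolynomial.coeff_monomial, if_neg (Ne.symm hne), h0]
        exact ⟨trivial, tlt_of_le_of_ne lin (hlead r hrf) hne⟩
    have hpevf : pev 𝒱 f = 0 := by
      funext v
      exact hfI v.1 v.2
    have e1 : phi 𝒱 m = (-c⁻¹) • pev 𝒱 g := by
      funext v
      have h0 : MvPolynomial.eval v.1 f = 0 := hfI v.1 v.2
      show MvPolynomial.eval v.1 (MvPolynomial.monomial m 1)
        = -c⁻¹ * MvPolynomial.eval v.1 g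
      rw [hgdef, map_sub, h0, zero_sub, MvPolynomial.eval_monomial, MvPolynomial.eval_monomial]
      field_simp
    rw [e1]
    exact Submodule.smul_mem _ _ (pev_mem_span 𝒱 hsupp)
  · intro hsp
    rw [Finsupp.mem_span_image_iff_linearCombination] at hsp
    obtain ⟨l, hl, hrep⟩ := hsp
    rw [Finsupp.mem_supported] at hl
    set g : MvPolynomial (Fin n) ℚ := ∑ r ∈ l.support, MvPolynomial.monomial r (l r) with hgdef
    have hgcoeff : ∀ r, MvPolynomial.coeff r g = l r := by
      intro r
      rw [hgdef, MvPolynomial.coeff_sum]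
      by_cases hr : r ∈ l.support
      · rw [Finset.sum_eq_single r]
        · simp [MvPolynomial.coeff_monomial]
        · intro b _ hb
          rw [MvPolynomial.coeff_monomial, if_neg hb]
        · intro hnr; exact absurd hr hnr
      · have h0 : l r = 0 := Finsupp.notMem_support_iff.1 hr
        rw [h0]
        apply Finset.sum_eq_zero
        intro b hb
        rw [MvPolynomial.coeff_monomial, if_neg]
        rintro rfl
        exact hr hb
    have hpevg : pev 𝒱 g = phi 𝒱 m := by
      rw [hgdef, map_sum, ← hrep, Finsupp.linearCombination_apply, Finsupp.sum]
      congr 1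
      funext r
      have e : MvPolynomial.monomial r (l r) = (l r) • MvPolynomial.monomial r (1:ℚ) := by
        rw [MvPolynomial.smul_monomial, smul_eq_mul, mul_one]
      rw [e, map_smul]
      rfl
    have hlm : l m = 0 := by
      by_cases hm : m ∈ l.support
      · exact absurd (hl hm).2 (tlt_irrefl lin)
      · exact Finsupp.notMem_support_iff.1 hm
    refine ⟨MvPolynomial.monomial m 1 - g, ?_, ?_, ?_, ?_⟩
    · intro v hv
      have h1 : MvPolynomial.eval v (MvPolynomial.monomial m (1:ℚ)) = phi 𝒱 m ⟨v, hv⟩ := rfl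
      have h2 : MvPolynomial.eval v g = pev 𝒱 g ⟨v, hv⟩ := rfl
      rw [map_sub, h1, h2, hpevg, sub_self]
    · intro h0
      have : MvPolynomial.coeff m (MvPolynomial.monomial m (1:ℚ) - g) = 1 - l m := by
        rw [MvPolynomial.coeff_sub, hgcoeff, MvPolynomial.coeff_monomial, if_pos rfl]
      rw [h0, hlm] at this
      simp at this
    · rw [MvPolynomial.mem_support_iff, MvPolynomial.coeff_sub, hgcoeff,
        MvPolynomial.coeff_monomial, if_pos rfl, hlm]
      simp
    · intro m' hm'
      have := MvPolynomial.support_sub (Fin n) (MvPolynomial.monomial m (1:ℚ)) g hm'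
      rw [Finset.mem_union] at this
      rcases this with h1 | h2
      · have := MvPolynomial.support_monomial_subset h1
        rw [Finset.mem_singleton] at this
        rw [this]
        exact lin.le_refl m
      · have hsup : g.support ⊆ l.support := by
          intro r hr
          have hne : MvPolynomial.coeff r g ≠ 0 := MvPolynomial.mem_support_iff.1 hr
          rw [hgcoeff] at hne
          exact Finsupp.mem_support_iff.2 hne
        exact tle_of_lt lin (hl (hsup h2)).2

theorem stdMon_eq_greedy (lin : LinearOrder (Mon n)) (𝒱 : Finset (Fin n → ℚ)) :
    stdMon lin (vanishIdeal (𝒱 : Set (Fin n → ℚ))) = greedy lin 𝒱 Set.univ := by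
  ext m
  constructor
  · intro h
    exact ⟨trivial, fun hs => h ((exists_lead_iff_mem_span lin 𝒱 m).2 hs)⟩
  · intro h hex
    exact h.2 ((exists_lead_iff_mem_span lin 𝒱 m).1 hex)

end NEDO
namespace NEDO

variable {n : ℕ}

theorem finset_exists_max (lin : LinearOrder (Mon n)) (t : Finset (Mon n)) (h : t.Nonempty) :
    ∃ m ∈ t, ∀ b ∈ t, lin.le b m := by
  classical
  induction t using Finset.induction_on with
  | empty => exact absurd h Finset.not_nonempty_empty
  | @insert a s ha IH =>
    rcases s.eq_empty_or_nonempty with rfl | hs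
    · exact ⟨a, Finset.mem_insert_self a _, by
        intro b hb
        rcases Finset.mem_insert.1 hb with rfl | hb'
        · exact lin.le_refl b
        · exact absurd hb' (Finset.notMem_empty b)⟩
    · obtain ⟨m, hm, hmax⟩ := IH hs
      rcases lin.le_total a m with hle | hle
      · refine ⟨m, Finset.mem_insert_of_mem hm, ?_⟩
        intro b hb
        rcases Finset.mem_insert.1 hb with rfl | hb'
        · exact hle
        · exact hmax b hb'
      · refine ⟨a, Finset.mem_insert_self a _, ?_⟩
        intro b hb
        rcases Finset.mem_insert.1 hb with rfl | hb'
        · exact lin.le_refl b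
        · exact lin.le_trans _ _ _ (hmax b hb') hle

variable {𝒱 : Finset (Fin n → ℚ)} {R R' : Set (Mon n)} {lin : LinearOrder (Mon n)}

theorem greedy_subset_region : greedy lin 𝒱 R ⊆ R := fun _ hm => hm.1

theorem greedy_inter_subset (h : R' ⊆ R) :
    (greedy lin 𝒱 R) ∩ R' ⊆ greedy lin 𝒱 R' := by
  rintro m ⟨⟨_, hm⟩, hmR'⟩
  refine ⟨hmR', fun hc => hm ?_⟩
  refine Submodule.span_mono ?_ hc
  exact Set.image_mono (fun r hr => ⟨h hr.1, hr.2⟩)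

theorem greedy_key (hwf : WellFounded lin.lt) :
    ∀ r : Mon n, r ∈ R → phi 𝒱 r ∈ Submodule.span ℚ (phi 𝒱 '' greedy lin 𝒱 R) := by
  intro r
  induction r using WellFounded.induction hwf with
  | _ x IH =>
    intro hxR
    by_cases hx : x ∈ greedy lin 𝒱 R
    · exact Submodule.subset_span ⟨x, hx, rfl⟩
    · have hsp : phi 𝒱 x ∈ Submodule.span ℚ (phi 𝒱 '' {r | r ∈ R ∧ lin.lt r x}) := by
        by_contra hc
        exact hx ⟨hxR, hc⟩
      refine Submodule.span_le.2 ?_ hsp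
      rintro y ⟨r, ⟨hrR, hrlt⟩, rfl⟩
      exact IH r hrlt hrR

theorem greedy_span (hwf : WellFounded lin.lt) :
    Submodule.span ℚ (phi 𝒱 '' greedy lin 𝒱 R) = Submodule.span ℚ (phi 𝒱 '' R) := by
  apply le_antisymm
  · exact Submodule.span_mono (Set.image_mono greedy_subset_region)
  · rw [Submodule.span_le]
    rintro y ⟨r, hr, rfl⟩
    exact greedy_key hwf r hr

theorem greedy_indep :
    LinearIndependent ℚ (fun m : greedy lin 𝒱 R => phi 𝒱 m.1) := by
  classical
  rw [linearIndependent_iff']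
  intro s g hsum j hj
  by_contra hgj
  set t := (s.filter (fun m => g m ≠ 0)).image Subtype.val with ht
  have htne : t.Nonempty := ⟨j.1, Finset.mem_image.2 ⟨j, Finset.mem_filter.2 ⟨hj, hgj⟩, rfl⟩⟩
  obtain ⟨mv, hmv, hmax⟩ := finset_exists_max lin t htne
  obtain ⟨j', hj', hj'v⟩ := Finset.mem_image.1 hmv
  have hj's : j' ∈ s := (Finset.mem_filter.1 hj').1
  have hgj' : g j' ≠ 0 := (Finset.mem_filter.1 hj').2
  have h0 : (∑ i ∈ s.erase j', g i • phi 𝒱 i.1) + g j' • phi 𝒱 j'.1 = 0 := by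
    rw [Finset.sum_erase_add s _ hj's]
    exact hsum
  have h1 : g j' • phi 𝒱 j'.1 = -∑ i ∈ s.erase j', g i • phi 𝒱 i.1 :=
    eq_neg_of_add_eq_zero_right h0
  have h2 : phi 𝒱 j'.1 = (g j')⁻¹ • (-∑ i ∈ s.erase j', g i • phi 𝒱 i.1) := by
    rw [← h1, smul_smul, inv_mul_cancel₀ hgj', one_smul]
  have hmem : phi 𝒱 j'.1 ∈
      Submodule.span ℚ (phi 𝒱 '' {r | r ∈ R ∧ lin.lt r j'.1}) := by
    rw [h2]
    refine Submodule.smul_mem _ _ (Submodule.neg_mem _ ?_)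
    refine Submodule.sum_mem _ ?_
    intro i hi
    by_cases hgi : g i = 0
    · rw [hgi, zero_smul]
      exact Submodule.zero_mem _
    · refine Submodule.smul_mem _ _ (Submodule.subset_span ⟨i.1, ⟨i.2.1, ?_⟩, rfl⟩)
      have hit : i.1 ∈ t := Finset.mem_image.2
        ⟨i, Finset.mem_filter.2 ⟨Finset.mem_of_mem_erase hi, hgi⟩, rfl⟩
      have hle : lin.le i.1 j'.1 := by
        rw [hj'v]
        exact hmax i.1 hit
      refine tlt_of_le_of_ne lin hle ?_
      intro hc
      exact (Finset.ne_of_mem_erase hi) (Subtype.ext hc)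
  exact j'.2.2 hmem

/-! ### Profile exactness -/

/-- Monomials whose `i`-th exponent is at most `E`. -/
def Mle (i : Fin n) (E : ℕ) : Set (Mon n) := {m | m i ≤ E}

theorem mem_Mle {i : Fin n} {E : ℕ} {m : Mon n} : m ∈ Mle i E ↔ m i ≤ E := Iff.rfl

/-- `T` is profile exact for `𝒱` in direction `i` (relative to region `MS A`). -/
def ProfileExact (A : Finset (Fin n)) (i : Fin n) (𝒱 : Finset (Fin n → ℚ))
    (T : Set (Mon n)) : Prop :=
  ∀ E : ℕ, Submodule.span ℚ (phi 𝒱 '' (T ∩ Mle i E))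
    = Submodule.span ℚ (phi 𝒱 '' (MS A ∩ Mle i E))

/-- A graded order always produces a profile-exact greedy set in its direction. -/
theorem graded_profileExact {A : Finset (Fin n)} {i : Fin n}
    (hwf : WellFounded lin.lt) (hg : GradedOn A i lin) :
    ProfileExact A i 𝒱 (greedy lin 𝒱 (MS A)) := by
  intro E
  apply le_antisymm
  · refine Submodule.span_mono (Set.image_mono ?_)
    exact Set.inter_subset_inter_left _ greedy_subset_region
  · rw [Submodule.span_le]
    rintro y ⟨r, hr, rfl⟩
    revert hr
    induction r using WellFounded.induction hwf with
    | _ x IH =>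
      rintro ⟨hxA, hxE⟩
      by_cases hx : x ∈ greedy lin 𝒱 (MS A)
      · exact Submodule.subset_span ⟨x, ⟨hx, hxE⟩, rfl⟩
      · have hsp : phi 𝒱 x ∈
            Submodule.span ℚ (phi 𝒱 '' {r | r ∈ MS A ∧ lin.lt r x}) := by
          by_contra hc
          exact hx ⟨hxA, hc⟩
        refine Submodule.span_le.2 ?_ hsp
        rintro y ⟨r, ⟨hrA, hrlt⟩, rfl⟩
        have hriE : r i ≤ E := le_trans (gradedOn_le_of_lt hg hrA hxA hrlt) hxE
        exact IH r hrlt ⟨hrA, hriE⟩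

/-- independent family + spanning subset is everything -/
theorem indep_span_subset_eq {B C : Set (Mon n)}
    (hind : LinearIndependent ℚ (fun m : B => phi 𝒱 m.1))
    (hCB : C ⊆ B)
    (hsp : Submodule.span ℚ (phi 𝒱 '' B) ≤ Submodule.span ℚ (phi 𝒱 '' C)) :
    B = C := by
  refine Set.Subset.antisymm ?_ hCB
  intro b hb
  by_contra hbC
  have h1 : phi 𝒱 b ∈ Submodule.span ℚ (phi 𝒱 '' C) :=
    hsp (Submodule.subset_span ⟨b, hb, rfl⟩)
  have h2 : phi 𝒱 b ∉
      Submodule.span ℚ ((fun m : B => phi 𝒱 m.1) '' {x : B | x.1 ∈ C}) := by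
    have := hind.notMem_span_image (s := {x : B | x.1 ∈ C}) (x := ⟨b, hb⟩) hbC
    exact this
  apply h2
  refine Submodule.span_le.2 ?_ h1
  rintro y ⟨c, hc, rfl⟩
  exact Submodule.subset_span ⟨⟨c, hCB hc⟩, hc, rfl⟩

/-! ### Claim A : graded refinements do not change the greedy set -/

theorem claimA {A : Finset (Fin n)} {i : Fin n} (τ ρ : LinearOrder (Mon n))
    (hτ : IsTermOrder τ) (hρ : IsTermOrder ρ)
    (hrel : ∀ u v : Mon n, ρ.lt u v ↔ (u i < v i ∨ (u i = v i ∧ τ.lt u v)))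
    (hex : ProfileExact A i 𝒱 (greedy τ 𝒱 (MS A))) :
    greedy ρ 𝒱 (MS A) = greedy τ 𝒱 (MS A) := by
  have hwfτ : WellFounded τ.lt := term_wf τ hτ
  have hwfρ : WellFounded ρ.lt := term_wf ρ hρ
  have hgρ : GradedOn A i ρ := fun u v _ _ h => (hrel u v).2 (Or.inl h)
  set T := greedy τ 𝒱 (MS A) with hT
  set Sρ := greedy ρ 𝒱 (MS A) with hSρ
  -- step (d) : T ∩ Mle i E = greedy over the truncated region
  have hd : ∀ E : ℕ, T ∩ Mle i E = greedy τ 𝒱 (MS A ∩ Mle i E) := by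
    intro E
    have hsub : T ∩ Mle i E ⊆ greedy τ 𝒱 (MS A ∩ Mle i E) := by
      intro m hm
      exact greedy_inter_subset Set.inter_subset_left
        ⟨hm.1, greedy_subset_region hm.1, hm.2⟩
    have := indep_span_subset_eq (𝒱 := 𝒱)
      (B := greedy τ 𝒱 (MS A ∩ Mle i E)) (C := T ∩ Mle i E)
      greedy_indep hsub ?_
    · exact this.symm
    · rw [greedy_span hwfτ, ← hex E]
  -- stratum inclusion : Sρ ⊆ pieces of T
  have hstr : ∀ m, m ∈ Sρ → m ∈ greedy τ 𝒱 (MS A ∩ Mle i (m i)) := by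
    intro m hm
    refine ⟨⟨hm.1, mem_Mle.2 (le_refl _)⟩, ?_⟩
    intro hc
    apply hm.2
    refine Submodule.span_le.2 ?_ hc
    rintro y ⟨r, ⟨⟨hrA, hrE⟩, hrlt⟩, rfl⟩
    refine Submodule.subset_span ⟨r, ⟨hrA, ?_⟩, rfl⟩
    rcases lt_or_eq_of_le (mem_Mle.1 hrE) with h | h
    · exact (hrel r m).2 (Or.inl h)
    · exact (hrel r m).2 (Or.inr ⟨h, hrlt⟩)
  have hsub2 : ∀ E : ℕ, Sρ ∩ Mle i E ⊆ T ∩ Mle i E := by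
    intro E m hm
    have h1 : m ∈ greedy τ 𝒱 (MS A ∩ Mle i (m i)) := hstr m hm.1
    rw [← hd (m i)] at h1
    exact ⟨h1.1, hm.2⟩
  -- equality of truncations
  have heq : ∀ E : ℕ, Sρ ∩ Mle i E = T ∩ Mle i E := by
    intro E
    rw [hd E]
    refine (indep_span_subset_eq (𝒱 := 𝒱)
      (B := greedy τ 𝒱 (MS A ∩ Mle i E)) (C := Sρ ∩ Mle i E)
      greedy_indep (by rw [← hd E]; exact hsub2 E) ?_).symm
    rw [greedy_span hwfτ, ← graded_profileExact (𝒱 := 𝒱) hwfρ hgρ E]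
  ext m
  constructor
  · intro hm
    exact ((heq (m i)).subset ⟨hm, mem_Mle.2 (le_refl _)⟩).1
  · intro hm
    exact ((heq (m i)).symm.subset ⟨hm, mem_Mle.2 (le_refl _)⟩).1

end NEDO
namespace NEDO

variable {n : ℕ}

/-! ### Support utilities -/

theorem suppMS_mul {A : Finset (Fin n)} {f g : MvPolynomial (Fin n) ℚ}
    (hf : ↑f.support ⊆ MS A) (hg : ↑g.support ⊆ MS A) :
    ↑(f * g).support ⊆ MS A := by
  classical
  intro r hr
  have := MvPolynomial.support_mul f g hr
  rw [Finset.mem_add] at this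
  obtain ⟨r1, h1, r2, h2, rfl⟩ := this
  exact MS_add (hf h1) (hg h2)

theorem suppMS_C {A : Finset (Fin n)} (c : ℚ) :
    ↑(MvPolynomial.C (σ := Fin n) c).support ⊆ MS A := by
  intro r hr
  rw [Finset.mem_coe, MvPolynomial.mem_support_iff, MvPolynomial.coeff_C] at hr
  have : r = 0 := by
    by_contra hc
    rw [if_neg (by exact fun h => hc h.symm)] at hr
    exact hr rfl
  subst this
  intro j _
  rfl

theorem suppMS_one {A : Finset (Fin n)} :
    ↑(1 : MvPolynomial (Fin n) ℚ).support ⊆ MS A := by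
  have : (1 : MvPolynomial (Fin n) ℚ) = MvPolynomial.C 1 := rfl
  rw [this]
  exact suppMS_C 1

theorem suppMS_prod {A : Finset (Fin n)} {ι : Type*} (s : Finset ι)
    (f : ι → MvPolynomial (Fin n) ℚ) (hf : ∀ x ∈ s, ↑(f x).support ⊆ MS A) :
    ↑(∏ x ∈ s, f x).support ⊆ MS A := by
  classical
  induction s using Finset.induction_on with
  | empty => simpa using suppMS_one
  | @insert a s ha IH =>
    rw [Finset.prod_insert ha]
    exact suppMS_mul (hf a (Finset.mem_insert_self a s))
      (IH (fun x hx => hf x (Finset.mem_insert_of_mem hx)))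

/-- Evaluation of an `MS A`-supported polynomial only depends on `A`-coordinates. -/
theorem eval_eq_of_agree {A : Finset (Fin n)} {f : MvPolynomial (Fin n) ℚ}
    (hf : ↑f.support ⊆ MS A) {v w : Fin n → ℚ} (h : ∀ j ∈ A, v j = w j) :
    MvPolynomial.eval v f = MvPolynomial.eval w f := by
  conv_lhs => rw [f.as_sum]
  conv_rhs => rw [f.as_sum]
  rw [map_sum, map_sum]
  refine Finset.sum_congr rfl ?_
  intro m hm
  rw [MvPolynomial.eval_monomial, MvPolynomial.eval_monomial]
  congr 1
  refine Finsupp.prod_congr ?_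
  intro j hj
  have hjA : j ∈ A := by
    by_contra hc
    exact (Finsupp.mem_support_iff.1 hj) ((hf hm) j hc)
  rw [h j hjA]

/-! ### Indicator polynomials -/

noncomputable def dfactor (A : Finset (Fin n)) (u w : Fin n → ℚ) : MvPolynomial (Fin n) ℚ :=
  if h : ∃ j ∈ A, u j ≠ w j then
    MvPolynomial.C (u h.choose - w h.choose)⁻¹ * MvPolynomial.X h.choose
      - MvPolynomial.C ((u h.choose - w h.choose)⁻¹ * w h.choose)
  else 1

theorem dfactor_supp (A : Finset (Fin n)) (u w : Fin n → ℚ) :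
    ↑(dfactor A u w).support ⊆ MS A := by
  rw [dfactor]
  split_ifs with h
  · obtain ⟨hjA, _⟩ := h.choose_spec
    intro r hr
    have h2 := MvPolynomial.support_sub (Fin n) _ _ hr
    rw [Finset.mem_union] at h2
    rcases h2 with h2 | h2
    · refine suppMS_mul (suppMS_C _) ?_ h2
      intro r' hr'
      rw [Finset.mem_coe, MvPolynomial.support_X] at hr'
      rw [Finset.mem_singleton] at hr'
      subst hr'
      exact MS_single hjA 1
    · exact suppMS_C _ h2
  · exact suppMS_one

theorem dfactor_eval_self (A : Finset (Fin n)) (u w : Fin n → ℚ)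
    (h : ∃ j ∈ A, u j ≠ w j) : MvPolynomial.eval u (dfactor A u w) = 1 := by
  rw [dfactor, dif_pos h]
  obtain ⟨_, hne⟩ := h.choose_spec
  have hd : u h.choose - w h.choose ≠ 0 := sub_ne_zero_of_ne hne
  simp only [map_sub, map_mul, MvPolynomial.eval_C, MvPolynomial.eval_X]
  field_simp

theorem dfactor_eval_other (A : Finset (Fin n)) (u w : Fin n → ℚ)
    (h : ∃ j ∈ A, u j ≠ w j) : MvPolynomial.eval w (dfactor A u w) = 0 := by
  rw [dfactor, dif_pos h]
  simp only [map_sub, map_mul, MvPolynomial.eval_C, MvPolynomial.eval_X]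
  ring

noncomputable def delta (A : Finset (Fin n)) (U : Finset (Fin n → ℚ)) (u : Fin n → ℚ) :
    MvPolynomial (Fin n) ℚ :=
  ∏ w ∈ U.erase u, dfactor A u w

theorem delta_supp (A : Finset (Fin n)) (U : Finset (Fin n → ℚ)) (u : Fin n → ℚ) :
    ↑(delta A U u).support ⊆ MS A :=
  suppMS_prod _ _ (fun w _ => dfactor_supp A u w)

theorem delta_eval_self (A : Finset (Fin n)) (U : Finset (Fin n → ℚ)) (u : Fin n → ℚ)
    (hdiff : ∀ w ∈ U, w ≠ u → ∃ j ∈ A, u j ≠ w j) :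
    MvPolynomial.eval u (delta A U u) = 1 := by
  rw [delta, map_prod]
  refine Finset.prod_eq_one ?_
  intro w hw
  rw [Finset.mem_erase] at hw
  exact dfactor_eval_self A u w (hdiff w hw.2 hw.1)

theorem delta_eval_other (A : Finset (Fin n)) (U : Finset (Fin n → ℚ)) (u w : Fin n → ℚ)
    (hw : w ∈ U) (hne : w ≠ u) (hdiff : ∃ j ∈ A, u j ≠ w j) :
    MvPolynomial.eval w (delta A U u) = 0 := by
  rw [delta, map_prod]
  refine Finset.prod_eq_zero (Finset.mem_erase.2 ⟨hne, hw⟩) ?_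
  exact dfactor_eval_other A u w hdiff

/-! ### Univariate polynomials in one MvPolynomial variable -/

noncomputable def uni (i : Fin n) (q : Polynomial ℚ) (D : ℕ) : MvPolynomial (Fin n) ℚ :=
  ∑ e ∈ Finset.range D, MvPolynomial.monomial (Finsupp.single i e) (q.coeff e)

theorem eval_uni {i : Fin n} {q : Polynomial ℚ} {D : ℕ} (hD : q.natDegree < D)
    (v : Fin n → ℚ) : MvPolynomial.eval v (uni i q D) = q.eval (v i) := by
  rw [Polynomial.eval_eq_sum_range' hD, uni, map_sum]
  refine Finset.sum_congr rfl ?_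
  intro e _
  rw [MvPolynomial.eval_monomial]
  congr 1
  rw [Finsupp.prod_single_index]
  exact pow_zero _

theorem uni_supp {i : Fin n} {q : Polynomial ℚ} {D : ℕ} :
    ∀ r ∈ (uni i q D).support, ∃ e < D, r = Finsupp.single i e := by
  intro r hr
  have := MvPolynomial.support_sum hr
  rw [Finset.mem_biUnion] at this
  obtain ⟨e, he, hre⟩ := this
  have := MvPolynomial.support_monomial_subset hre
  rw [Finset.mem_singleton] at this
  exact ⟨e, Finset.mem_range.1 he, this⟩

/-! ### Fibers and sections -/

noncomputable def fib (𝒱 : Finset (Fin n → ℚ)) (i : Fin n) (u : Fin n → ℚ) :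
    Finset (Fin n → ℚ) := 𝒱.filter (fun v => Function.update v i 0 = u)

noncomputable def tails (𝒱 : Finset (Fin n → ℚ)) (i : Fin n) : Finset (Fin n → ℚ) :=
  𝒱.image (fun v => Function.update v i 0)

noncomputable def secW (𝒱 : Finset (Fin n → ℚ)) (i : Fin n) (d : ℕ) :
    Finset (Fin n → ℚ) := (tails 𝒱 i).filter (fun u => d < (fib 𝒱 i u).card)

noncomputable def vals (𝒱 : Finset (Fin n → ℚ)) (i : Fin n) (u : Fin n → ℚ) : Finset ℚ :=
  (fib 𝒱 i u).image (fun v => v i)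

theorem fib_inj (𝒱 : Finset (Fin n → ℚ)) (i : Fin n) (u : Fin n → ℚ) :
    Set.InjOn (fun v : Fin n → ℚ => v i) ↑(fib 𝒱 i u) := by
  intro v hv v' hv' hvv
  have h1 : Function.update v i 0 = u := (Finset.mem_filter.1 hv).2
  have h2 : Function.update v' i 0 = u := (Finset.mem_filter.1 hv').2
  funext j
  rcases eq_or_ne j i with rfl | hne
  · exact hvv
  · have := congrFun (h1.trans h2.symm) j
    rwa [Function.update_of_ne hne, Function.update_of_ne hne] at this

theorem vals_card (𝒱 : Finset (Fin n → ℚ)) (i : Fin n) (u : Fin n → ℚ) :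
    (vals 𝒱 i u).card = (fib 𝒱 i u).card :=
  Finset.card_image_of_injOn (fib_inj 𝒱 i u)

theorem mem_vals (𝒱 : Finset (Fin n → ℚ)) (i : Fin n) {v : Fin n → ℚ} (hv : v ∈ 𝒱) :
    v i ∈ vals 𝒱 i (Function.update v i 0) := by
  refine Finset.mem_image.2 ⟨v, ?_, rfl⟩
  exact Finset.mem_filter.2 ⟨hv, rfl⟩

theorem tails_supported {A : Finset (Fin n)} {i : Fin n}
    {𝒱 : Finset (Fin n → ℚ)} (h𝒱 : ∀ v ∈ 𝒱, ∀ j ∉ A, v j = 0)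
    {u : Fin n → ℚ} (hu : u ∈ tails 𝒱 i) : ∀ j ∉ A.erase i, u j = 0 := by
  obtain ⟨v, hv, rfl⟩ := Finset.mem_image.1 hu
  intro j hj
  rcases eq_or_ne j i with rfl | hne
  · exact Function.update_self _ _ _
  · rw [Function.update_of_ne hne]
    refine h𝒱 v hv j ?_
    intro hjA
    exact hj (Finset.mem_erase.2 ⟨hne, hjA⟩)

theorem secW_supported {A : Finset (Fin n)} {i : Fin n} {d : ℕ}
    {𝒱 : Finset (Fin n → ℚ)} (h𝒱 : ∀ v ∈ 𝒱, ∀ j ∉ A, v j = 0)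
    {u : Fin n → ℚ} (hu : u ∈ secW 𝒱 i d) : ∀ j ∉ A.erase i, u j = 0 :=
  tails_supported h𝒱 (Finset.mem_filter.1 hu).1

end NEDO
namespace NEDO

variable {n : ℕ}

theorem eval_monomial_single (v : Fin n → ℚ) (i : Fin n) (d : ℕ) :
    MvPolynomial.eval v (MvPolynomial.monomial (Finsupp.single i d) (1:ℚ)) = v i ^ d := by
  rw [MvPolynomial.eval_monomial, one_mul, Finsupp.prod_single_index]
  exact pow_zero _

theorem eval_monomial_split (v : Fin n → ℚ) (i : Fin n) (t : Mon n) (d : ℕ) :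
    MvPolynomial.eval v (MvPolynomial.monomial (t + Finsupp.single i d) (1:ℚ))
      = MvPolynomial.eval v (MvPolynomial.monomial t (1:ℚ)) * v i ^ d := by
  have : MvPolynomial.monomial (t + Finsupp.single i d) (1:ℚ)
      = MvPolynomial.monomial t 1 * MvPolynomial.monomial (Finsupp.single i d) 1 := by
    rw [MvPolynomial.monomial_mul, mul_one]
  rw [this, map_mul, eval_monomial_single]

theorem eval_tail {A' : Finset (Fin n)} {i : Fin n} (hiA' : i ∉ A')
    {f : MvPolynomial (Fin n) ℚ} (hf : ↑f.support ⊆ MS A') (v : Fin n → ℚ) :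
    MvPolynomial.eval v f = MvPolynomial.eval (Function.update v i 0) f := by
  refine eval_eq_of_agree hf ?_
  intro j hj
  have hne : j ≠ i := by rintro rfl; exact hiA' hj
  exact (Function.update_of_ne hne 0 v).symm

theorem monomial_supp_MS {A' : Finset (Fin n)} {t : Mon n} (ht : t ∈ MS A') (c : ℚ) :
    ↑(MvPolynomial.monomial t c).support ⊆ MS A' := by
  intro r hr
  have := MvPolynomial.support_monomial_subset hr
  rw [Finset.mem_singleton] at this
  subst this
  exact ht

/-- forward direction: a global spanning relation yields one on the section. -/
theorem decomp_fwd {A : Finset (Fin n)} {i : Fin n} (hiA : i ∈ A)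
    (lin : LinearOrder (Mon n)) (hterm : IsTermOrder lin) (hg : GradedOn A i lin)
    (𝒱 : Finset (Fin n → ℚ))
    (t : Mon n) (ht : t ∈ MS (A.erase i)) (d : ℕ)
    (hsp : phi 𝒱 (t + Finsupp.single i d) ∈ Submodule.span ℚ
      (phi 𝒱 '' {r | r ∈ MS A ∧ lin.lt r (t + Finsupp.single i d)})) :
    phi (secW 𝒱 i d) t ∈ Submodule.span ℚ
      (phi (secW 𝒱 i d) '' {r | r ∈ MS (A.erase i) ∧ lin.lt r t}) := by
  classical
  set m := t + Finsupp.single i d with hm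
  have hiA' : i ∉ A.erase i := by simp
  have hti : t i = 0 := ht i hiA'
  have hmi : m i = d := by simp [hm, hti]
  have hmA : m ∈ MS A := MS_add (MS_mono (Finset.erase_subset i A) ht) (MS_single hiA d)
  rw [Finsupp.mem_span_image_iff_linearCombination] at hsp
  obtain ⟨l, hl, hrep⟩ := hsp
  rw [Finsupp.mem_supported] at hl
  have hrid : ∀ r ∈ l.support, r i ≤ d := by
    intro r hr
    have h2 := gradedOn_le_of_lt hg (hl hr).1 hmA (hl hr).2
    rwa [hmi] at h2
  -- pointwise identity on the section
  have hpoint : ∀ u ∈ secW 𝒱 i d, MvPolynomial.eval u (MvPolynomial.monomial t (1:ℚ))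
      = ∑ r ∈ l.support.filter (fun r => r i = d),
          l r * MvPolynomial.eval u (MvPolynomial.monomial (Finsupp.erase i r) (1:ℚ)) := by
    intro u hu
    obtain ⟨hut, hcard⟩ := Finset.mem_filter.1 hu
    set c : ℚ := MvPolynomial.eval u (MvPolynomial.monomial t (1:ℚ)) with hc
    set P : Polynomial ℚ :=
      Polynomial.C c * Polynomial.X ^ d
        - ∑ r ∈ l.support, Polynomial.C (l r * MvPolynomial.eval u
            (MvPolynomial.monomial (Finsupp.erase i r) (1:ℚ))) * Polynomial.X ^ (r i) with hP
    have hdeg : P.natDegree ≤ d := by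
      refine le_trans (Polynomial.natDegree_sub_le _ _) ?_
      rw [max_le_iff]
      constructor
      · exact le_trans (Polynomial.natDegree_C_mul_le _ _)
          (le_of_eq (Polynomial.natDegree_X_pow d))
      · refine Polynomial.natDegree_sum_le_of_forall_le _ _ ?_
        intro r hr
        exact le_trans (Polynomial.natDegree_C_mul_le _ _)
          (le_trans (le_of_eq (Polynomial.natDegree_X_pow _)) (hrid r hr))
    have hroot : ∀ v ∈ fib 𝒱 i u, P.eval (v i) = 0 := by
      intro v hv
      obtain ⟨hv𝒱, hvu⟩ := Finset.mem_filter.1 hv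
      have hv1 : MvPolynomial.eval v (MvPolynomial.monomial m (1:ℚ)) = c * (v i) ^ d := by
        rw [hm, eval_monomial_split, hc]
        congr 1
        rw [eval_tail hiA' (monomial_supp_MS ht 1) v, hvu]
      have hv2 : ∀ r ∈ l.support, MvPolynomial.eval v (MvPolynomial.monomial r (1:ℚ))
          = MvPolynomial.eval u (MvPolynomial.monomial (Finsupp.erase i r) (1:ℚ))
              * (v i) ^ (r i) := by
        intro r hr
        conv_lhs => rw [show r = Finsupp.erase i r + Finsupp.single i (r i) from
          (Finsupp.erase_add_single i r).symm]
        rw [eval_monomial_split]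
        congr 1
        rw [eval_tail hiA' (monomial_supp_MS (MS_erase_mem (hl hr).1) 1) v, hvu]
      have hglob := congrFun hrep ⟨v, hv𝒱⟩
      rw [Finsupp.linearCombination_apply, Finsupp.sum] at hglob
      have hglob2 : (∑ r ∈ l.support, l r * MvPolynomial.eval v (MvPolynomial.monomial r (1:ℚ)))
          = MvPolynomial.eval v (MvPolynomial.monomial m (1:ℚ)) := by
        have : (∑ r ∈ l.support, l r • phi 𝒱 r) ⟨v, hv𝒱⟩
            = ∑ r ∈ l.support, l r * MvPolynomial.eval v (MvPolynomial.monomial r (1:ℚ)) := by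
          rw [Finset.sum_apply]
          rfl
        rw [← this]
        exact hglob
      rw [hP]
      rw [Polynomial.eval_sub, Polynomial.eval_mul, Polynomial.eval_C, Polynomial.eval_pow,
        Polynomial.eval_X, Polynomial.eval_finset_sum]
      have e2 : ∀ r ∈ l.support,
          Polynomial.eval (v i) (Polynomial.C (l r * MvPolynomial.eval u
            (MvPolynomial.monomial (Finsupp.erase i r) (1:ℚ))) * Polynomial.X ^ (r i))
          = l r * MvPolynomial.eval v (MvPolynomial.monomial r (1:ℚ)) := by
        intro r hr
        rw [Polynomial.eval_mul, Polynomial.eval_C, Polynomial.eval_pow, Polynomial.eval_X,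
          hv2 r hr]
        ring
      rw [Finset.sum_congr rfl e2, hglob2, hv1]
      ring
    have hP0 : P = 0 := by
      refine Polynomial.eq_zero_of_natDegree_lt_card_of_eval_eq_zero P
        (f := fun a : {x // x ∈ vals 𝒱 i u} => (a : ℚ)) Subtype.val_injective ?_ ?_
      · rintro ⟨a, ha⟩
        obtain ⟨v, hv, rfl⟩ := Finset.mem_image.1 ha
        exact hroot v hv
      · rw [Fintype.card_coe, vals_card]
        omega
    have hcoeff : Polynomial.coeff P d = 0 := by
      rw [hP0]
      exact Polynomial.coeff_zero d
    rw [hP, Polynomial.coeff_sub, Polynomial.coeff_C_mul, Polynomial.coeff_X_pow,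
      Polynomial.finset_sum_coeff] at hcoeff
    rw [if_pos rfl, mul_one] at hcoeff
    have e35 : ∀ r ∈ l.support,
        Polynomial.coeff (Polynomial.C (l r * MvPolynomial.eval u
            (MvPolynomial.monomial (Finsupp.erase i r) (1:ℚ))) * Polynomial.X ^ (r i)) d
          = l r * MvPolynomial.eval u (MvPolynomial.monomial (Finsupp.erase i r) (1:ℚ))
            * (if d = r i then (1:ℚ) else 0) := by
      intro r _
      rw [Polynomial.coeff_C_mul, Polynomial.coeff_X_pow, mul_assoc]
    rw [Finset.sum_congr rfl e35] at hcoeff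
    have e3 : ∀ r ∈ l.support,
        l r * MvPolynomial.eval u (MvPolynomial.monomial (Finsupp.erase i r) (1:ℚ))
            * (if d = r i then (1:ℚ) else 0)
          = if r i = d then l r * MvPolynomial.eval u
              (MvPolynomial.monomial (Finsupp.erase i r) (1:ℚ)) else 0 := by
      intro r _
      rcases eq_or_ne (r i) d with h | h
      · rw [if_pos h.symm, if_pos h, mul_one]
      · rw [if_neg (Ne.symm h), if_neg h, mul_zero]
    rw [Finset.sum_congr rfl e3, ← Finset.sum_filter] at hcoeff
    have := sub_eq_zero.1 hcoeff
    rw [hc] at this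
    exact this
  -- conclude
  have hfun : phi (secW 𝒱 i d) t = pev (secW 𝒱 i d)
      (∑ r ∈ l.support.filter (fun r => r i = d),
        MvPolynomial.monomial (Finsupp.erase i r) (l r)) := by
    funext u
    show MvPolynomial.eval u.1 (MvPolynomial.monomial t (1:ℚ)) = _
    have : pev (secW 𝒱 i d) (∑ r ∈ l.support.filter (fun r => r i = d),
        MvPolynomial.monomial (Finsupp.erase i r) (l r)) u
        = ∑ r ∈ l.support.filter (fun r => r i = d),
            MvPolynomial.eval u.1 (MvPolynomial.monomial (Finsupp.erase i r) (l r)) := by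
      rw [map_sum, Finset.sum_apply]
      rfl
    rw [this, hpoint u.1 u.2]
    refine Finset.sum_congr rfl ?_
    intro r _
    rw [MvPolynomial.eval_monomial, MvPolynomial.eval_monomial, one_mul]
  rw [hfun]
  refine pev_mem_span _ ?_
  intro r hr
  have h2 := MvPolynomial.support_sum hr
  rw [Finset.mem_biUnion] at h2
  obtain ⟨r0, hr0, hrr0⟩ := h2
  obtain ⟨hr0l, hr0d⟩ := Finset.mem_filter.1 hr0
  have := MvPolynomial.support_monomial_subset hrr0
  rw [Finset.mem_singleton] at this
  subst this
  refine ⟨MS_erase_mem (hl hr0l).1, ?_⟩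
  have h3 : lin.lt (Finsupp.erase i r0 + Finsupp.single i d) (t + Finsupp.single i d) := by
    have e : Finsupp.erase i r0 + Finsupp.single i d = r0 := by
      rw [← hr0d]
      exact Finsupp.erase_add_single i r0
    rw [e]
    exact (hl hr0l).2
  exact term_add_lt_cancel lin hterm h3

end NEDO
namespace NEDO

variable {n : ℕ}

theorem decomp_bwd {A : Finset (Fin n)} {i : Fin n} (hiA : i ∈ A)
    (lin : LinearOrder (Mon n)) (hterm : IsTermOrder lin) (hg : GradedOn A i lin)
    (𝒱 : Finset (Fin n → ℚ)) (h𝒱 : ∀ v ∈ 𝒱, ∀ j ∉ A, v j = 0)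
    (t : Mon n) (ht : t ∈ MS (A.erase i)) (d : ℕ)
    (hsp : phi (secW 𝒱 i d) t ∈ Submodule.span ℚ
      (phi (secW 𝒱 i d) '' {r | r ∈ MS (A.erase i) ∧ lin.lt r t})) :
    phi 𝒱 (t + Finsupp.single i d) ∈ Submodule.span ℚ
      (phi 𝒱 '' {r | r ∈ MS A ∧ lin.lt r (t + Finsupp.single i d)}) := by
  classical
  set m := t + Finsupp.single i d with hm
  have hiA' : i ∉ A.erase i := by simp
  have hti : t i = 0 := ht i hiA'
  have hmi : m i = d := by simp [hm, hti]
  have hmA : m ∈ MS A := MS_add (MS_mono (Finset.erase_subset i A) ht) (MS_single hiA d)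
  rw [Finsupp.mem_span_image_iff_linearCombination] at hsp
  obtain ⟨l, hl, hrep⟩ := hsp
  rw [Finsupp.mem_supported] at hl
  set G : MvPolynomial (Fin n) ℚ :=
    MvPolynomial.monomial t 1 - ∑ r ∈ l.support, MvPolynomial.monomial r (l r) with hGdef
  have hGsupp : ↑G.support ⊆ MS (A.erase i) := by
    intro r hr
    have h2 := MvPolynomial.support_sub (Fin n) _ _ hr
    rw [Finset.mem_union] at h2
    rcases h2 with h2 | h2
    · have := MvPolynomial.support_monomial_subset h2
      rw [Finset.mem_singleton] at this
      subst this
      exact ht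
    · have h3 := MvPolynomial.support_sum h2
      rw [Finset.mem_biUnion] at h3
      obtain ⟨r0, hr0, hrr0⟩ := h3
      have := MvPolynomial.support_monomial_subset hrr0
      rw [Finset.mem_singleton] at this
      subst this
      exact (hl hr0).1
  have hGeval : ∀ u ∈ secW 𝒱 i d, MvPolynomial.eval u G = 0 := by
    intro u hu
    have hpt := congrFun hrep ⟨u, hu⟩
    rw [Finsupp.linearCombination_apply, Finsupp.sum] at hpt
    have e1 : (∑ r ∈ l.support, l r • phi (secW 𝒱 i d) r) ⟨u, hu⟩
        = ∑ r ∈ l.support, l r * MvPolynomial.eval u (MvPolynomial.monomial r (1:ℚ)) := by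
      rw [Finset.sum_apply]
      rfl
    rw [e1] at hpt
    rw [hGdef, map_sub, map_sum]
    have e2 : ∀ r ∈ l.support, MvPolynomial.eval u (MvPolynomial.monomial r (l r))
        = l r * MvPolynomial.eval u (MvPolynomial.monomial r (1:ℚ)) := by
      intro r _
      rw [MvPolynomial.eval_monomial, MvPolynomial.eval_monomial, one_mul]
    rw [Finset.sum_congr rfl e2, hpt]
    exact sub_eq_zero.2 rfl
  set lows := tails 𝒱 i \ secW 𝒱 i d with hlows
  have hlowcard : ∀ u ∈ lows, 1 ≤ (fib 𝒱 i u).card ∧ (fib 𝒱 i u).card ≤ d := by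
    intro u hu
    obtain ⟨hut, hnot⟩ := Finset.mem_sdiff.1 hu
    constructor
    · obtain ⟨v, hv, hvu⟩ := Finset.mem_image.1 hut
      exact Finset.card_pos.2 ⟨v, Finset.mem_filter.2 ⟨hv, hvu⟩⟩
    · by_contra hc
      push_neg at hc
      exact hnot (Finset.mem_filter.2 ⟨hut, by omega⟩)
  have hQdeg : ∀ u ∈ lows,
      (Lagrange.interpolate (vals 𝒱 i u) id (fun a => a ^ d)).natDegree < d := by
    intro u hu
    have h1 := Lagrange.degree_interpolate_lt (s := vals 𝒱 i u) (v := id)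
      (fun a => a ^ d) (Set.injOn_id _)
    have hcard : (vals 𝒱 i u).card ≤ d := by
      rw [vals_card]
      exact (hlowcard u hu).2
    have hcard1 : 1 ≤ (vals 𝒱 i u).card := by
      rw [vals_card]
      exact (hlowcard u hu).1
    rcases eq_or_ne (Lagrange.interpolate (vals 𝒱 i u) id (fun a => a ^ d)) 0 with h0 | h0
    · rw [h0, Polynomial.natDegree_zero]
      omega
    · rw [Polynomial.natDegree_lt_iff_degree_lt h0]
      refine lt_of_lt_of_le h1 ?_
      exact_mod_cast Nat.cast_le.2 hcard
  set Hc : MvPolynomial (Fin n) ℚ := ∑ u ∈ lows,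
    delta (A.erase i) (tails 𝒱 i) u
      * uni i (Lagrange.interpolate (vals 𝒱 i u) id (fun a => a ^ d)) d with hHc
  have hdiff : ∀ u ∈ tails 𝒱 i, ∀ w ∈ tails 𝒱 i, w ≠ u → ∃ j ∈ A.erase i, u j ≠ w j := by
    intro u hu w hw hne
    by_contra hc
    push_neg at hc
    apply hne
    funext j
    by_cases hj : j ∈ A.erase i
    · exact (hc j hj).symm
    · rw [tails_supported h𝒱 hw j hj, tails_supported h𝒱 hu j hj]
  have hpt : ∀ v, v ∈ 𝒱 → MvPolynomial.eval v (MvPolynomial.monomial m (1:ℚ))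
      = MvPolynomial.eval v (Hc * G + ∑ r ∈ l.support,
          MvPolynomial.monomial (r + Finsupp.single i d) (l r)) := by
    intro v hv
    set u := Function.update v i 0 with hu
    have hut : u ∈ tails 𝒱 i := Finset.mem_image.2 ⟨v, hv, rfl⟩
    have eG : MvPolynomial.eval v G = MvPolynomial.eval u G := by
      rw [eval_tail hiA' hGsupp v]
    have esum : MvPolynomial.eval v (∑ r ∈ l.support,
        MvPolynomial.monomial (r + Finsupp.single i d) (l r))
        = (∑ r ∈ l.support, l r * MvPolynomial.eval v (MvPolynomial.monomial r (1:ℚ)))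
            * (v i) ^ d := by
      rw [map_sum, Finset.sum_mul]
      refine Finset.sum_congr rfl ?_
      intro r _
      have e9 : MvPolynomial.eval v (MvPolynomial.monomial (r + Finsupp.single i d) (l r))
          = l r * MvPolynomial.eval v (MvPolynomial.monomial (r + Finsupp.single i d) (1:ℚ)) := by
        rw [MvPolynomial.eval_monomial, MvPolynomial.eval_monomial, one_mul]
      rw [e9, eval_monomial_split]
      ring
    have emT : MvPolynomial.eval v (MvPolynomial.monomial m (1:ℚ))
        = MvPolynomial.eval v (MvPolynomial.monomial t (1:ℚ)) * (v i) ^ d := by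
      rw [hm, eval_monomial_split]
    have eT : MvPolynomial.eval v G = MvPolynomial.eval v (MvPolynomial.monomial t (1:ℚ))
        - ∑ r ∈ l.support, l r * MvPolynomial.eval v (MvPolynomial.monomial r (1:ℚ)) := by
      rw [hGdef, map_sub, map_sum]
      congr 1
      refine Finset.sum_congr rfl ?_
      intro r _
      rw [MvPolynomial.eval_monomial, MvPolynomial.eval_monomial, one_mul]
    rw [map_add, map_mul, esum]
    by_cases hcase : u ∈ secW 𝒱 i d
    · have hg0 : MvPolynomial.eval v G = 0 := by
        rw [eG]
        exact hGeval u hcase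
      have e5 : MvPolynomial.eval v (MvPolynomial.monomial t (1:ℚ))
          = ∑ r ∈ l.support, l r * MvPolynomial.eval v (MvPolynomial.monomial r (1:ℚ)) := by
        have := eT.symm.trans hg0
        exact sub_eq_zero.1 this
      rw [hg0, mul_zero, zero_add, emT, e5]
    · have hulows : u ∈ lows := Finset.mem_sdiff.2 ⟨hut, hcase⟩
      have hHcv : MvPolynomial.eval v Hc = (v i) ^ d := by
        rw [hHc, map_sum]
        rw [Finset.sum_eq_single u]
        · rw [map_mul]
          have h1 : MvPolynomial.eval v (delta (A.erase i) (tails 𝒱 i) u) = 1 := by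
            rw [eval_tail hiA' (delta_supp _ _ _) v, ← hu]
            exact delta_eval_self _ _ _ (fun w hw hne => hdiff u hut w hw hne)
          rw [h1, one_mul, eval_uni (hQdeg u hulows) v]
          have hnode : v i ∈ vals 𝒱 i u := by
            rw [hu]
            exact mem_vals 𝒱 i hv
          have := Lagrange.eval_interpolate_at_node (s := vals 𝒱 i u) (v := id)
            (i := v i) (fun a => a ^ d) (Set.injOn_id _) hnode
          simpa using this
        · intro u' hu' hne
          rw [map_mul]
          have h0 : MvPolynomial.eval v (delta (A.erase i) (tails 𝒱 i) u') = 0 := by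
            rw [eval_tail hiA' (delta_supp _ _ _) v, ← hu]
            refine delta_eval_other _ _ u' u hut (Ne.symm hne) ?_
            exact hdiff u' (Finset.mem_sdiff.1 hu').1 u hut (Ne.symm hne)
          rw [h0, zero_mul]
        · intro habs
          exact absurd hulows habs
      rw [hHcv, eT, emT]
      ring
  have hfun : phi 𝒱 m = pev 𝒱 (Hc * G + ∑ r ∈ l.support,
      MvPolynomial.monomial (r + Finsupp.single i d) (l r)) := by
    funext v
    exact hpt v.1 v.2
  rw [hfun]
  refine pev_mem_span 𝒱 ?_
  intro r hr
  have h2 := MvPolynomial.support_add hr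
  rw [Finset.mem_union] at h2
  rcases h2 with h2 | h2
  · have h3 := MvPolynomial.support_mul _ _ h2
    rw [Finset.mem_add] at h3
    obtain ⟨r1, hr1, r2, hr2, rfl⟩ := h3
    have h4 := MvPolynomial.support_sum hr1
    rw [Finset.mem_biUnion] at h4
    obtain ⟨u, hu, hr1u⟩ := h4
    have h5 := MvPolynomial.support_mul _ _ hr1u
    rw [Finset.mem_add] at h5
    obtain ⟨rδ, hrδ, re, hre, rfl⟩ := h5
    obtain ⟨e, hed, rfl⟩ := uni_supp _ hre
    have hrδA : rδ ∈ MS (A.erase i) := delta_supp _ _ _ hrδ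
    have hr2A : r2 ∈ MS (A.erase i) := hGsupp hr2
    have hMS : rδ + Finsupp.single i e + r2 ∈ MS A :=
      MS_add (MS_add (MS_mono (Finset.erase_subset i A) hrδA) (MS_single hiA e))
        (MS_mono (Finset.erase_subset i A) hr2A)
    refine ⟨hMS, ?_⟩
    refine hg _ _ hMS hmA ?_
    have h6 : rδ i = 0 := hrδA i hiA'
    have h7 : r2 i = 0 := hr2A i hiA'
    have e8 : (rδ + Finsupp.single i e + r2) i = e := by
      simp [Finsupp.add_apply, h6, h7]
    rw [e8, hmi]
    exact hed
  · have h3 := MvPolynomial.support_sum h2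
    rw [Finset.mem_biUnion] at h3
    obtain ⟨r0, hr0, hrr0⟩ := h3
    have := MvPolynomial.support_monomial_subset hrr0
    rw [Finset.mem_singleton] at this
    subst this
    refine ⟨MS_add (MS_mono (Finset.erase_subset i A) (hl hr0).1) (MS_single hiA d), ?_⟩
    rw [hm]
    exact term_add_lt lin hterm _ (hl hr0).2

/-- The decomposition of the greedy set of an `i`-graded order along `x_i`-strata. -/
theorem decomp {A : Finset (Fin n)} {i : Fin n} (hiA : i ∈ A)
    (lin : LinearOrder (Mon n)) (hterm : IsTermOrder lin) (hg : GradedOn A i lin)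
    (𝒱 : Finset (Fin n → ℚ)) (h𝒱 : ∀ v ∈ 𝒱, ∀ j ∉ A, v j = 0)
    (t : Mon n) (ht : t ∈ MS (A.erase i)) (d : ℕ) :
    (t + Finsupp.single i d) ∈ greedy lin 𝒱 (MS A)
      ↔ t ∈ greedy lin (secW 𝒱 i d) (MS (A.erase i)) := by
  have hmA : t + Finsupp.single i d ∈ MS A :=
    MS_add (MS_mono (Finset.erase_subset i A) ht) (MS_single hiA d)
  constructor
  · rintro ⟨_, hns⟩
    exact ⟨ht, fun hc => hns (decomp_bwd hiA lin hterm hg 𝒱 h𝒱 t ht d hc)⟩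
  · rintro ⟨_, hns⟩
    exact ⟨hmA, fun hc => hns (decomp_fwd hiA lin hterm hg 𝒱 t ht d hc)⟩

end NEDO
namespace NEDO

variable {n : ℕ}

inductive SeqGraded (lin : LinearOrder (Mon n)) : Finset (Fin n) → Prop where
  | empty : SeqGraded lin ∅
  | step {A : Finset (Fin n)} (i : Fin n) (hi : i ∈ A) (hg : GradedOn A i lin)
      (h : SeqGraded lin (A.erase i)) : SeqGraded lin A

theorem lex_seqGraded {σ : Equiv.Perm (Fin n)} {lin : LinearOrder (Mon n)}
    (hlex : IsLexOrder σ lin) (A : Finset (Fin n)) : SeqGraded lin A := by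
  classical
  induction A using Finset.strongInduction with
  | _ A IH =>
    rcases A.eq_empty_or_nonempty with rfl | hA
    · exact SeqGraded.empty
    · set s : Finset (Fin n) := Finset.univ.filter (fun l : Fin n => σ l ∈ A) with hs
      have hne : s.Nonempty := by
        obtain ⟨a, ha⟩ := hA
        exact ⟨σ.symm a, Finset.mem_filter.2 ⟨Finset.mem_univ _, by simpa using ha⟩⟩
      have hj0A : σ (s.min' hne) ∈ A := (Finset.mem_filter.1 (s.min'_mem hne)).2
      refine SeqGraded.step (σ (s.min' hne)) hj0A ?_ (IH _ (Finset.erase_ssubset hj0A))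
      intro u v hu hv huv
      rw [hlex]
      refine ⟨s.min' hne, huv, ?_⟩
      intro l hl
      have hlA : σ l ∉ A := by
        intro hc
        have hls : l ∈ s := Finset.mem_filter.2 ⟨Finset.mem_univ _, hc⟩
        exact absurd hl (not_lt.2 (s.min'_le l hls))
      rw [hu _ hlA, hv _ hlA]

theorem lex_term {σ : Equiv.Perm (Fin n)} {lin : LinearOrder (Mon n)}
    (hlex : IsLexOrder σ lin) : IsTermOrder lin := by
  classical
  constructor
  · intro u
    rcases eq_or_ne u 0 with rfl | hne
    · exact lin.le_refl 0
    · refine tle_of_lt lin ?_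
      rw [hlex]
      obtain ⟨j, hj⟩ : ∃ j, u j ≠ 0 := by
        by_contra hc
        push_neg at hc
        exact hne (Finsupp.ext hc)
      set s : Finset (Fin n) := Finset.univ.filter (fun l : Fin n => u (σ l) ≠ 0) with hs
      have hne2 : s.Nonempty :=
        ⟨σ.symm j, Finset.mem_filter.2 ⟨Finset.mem_univ _, by simpa using hj⟩⟩
      refine ⟨s.min' hne2, ?_, ?_⟩
      · have h1 : u (σ (s.min' hne2)) ≠ 0 := (Finset.mem_filter.1 (s.min'_mem hne2)).2
        simp only [Finsupp.coe_zero, Pi.zero_apply]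
        omega
      · intro l hl
        have hlu : u (σ l) = 0 := by
          by_contra hc
          have hls : l ∈ s := Finset.mem_filter.2 ⟨Finset.mem_univ _, hc⟩
          exact absurd hl (not_lt.2 (s.min'_le l hls))
        simp only [Finsupp.coe_zero, Pi.zero_apply, hlu]
  · intro u v w huv
    rcases eq_or_ne u v with rfl | hne
    · exact lin.le_refl _
    · have hlt : lin.lt u v := tlt_of_le_of_ne lin huv hne
      rw [hlex] at hlt
      obtain ⟨j, hj1, hj2⟩ := hlt
      refine tle_of_lt lin ?_
      rw [hlex]
      refine ⟨j, ?_, ?_⟩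
      · simp only [Finsupp.add_apply]
        omega
      · intro l hl
        simp only [Finsupp.add_apply]
        rw [hj2 l hl]

theorem MS_empty : MS (∅ : Finset (Fin n)) = {0} := by
  ext m
  constructor
  · intro hm
    have : m = 0 := by
      ext j
      exact hm j (Finset.notMem_empty j)
    simp [this]
  · intro hm
    rw [Set.mem_singleton_iff] at hm
    subst hm
    intro j _
    rfl

/-- The master induction. -/
theorem main : ∀ (N : ℕ) (A : Finset (Fin n)), A.card = N → ∀ (𝒱 : Finset (Fin n → ℚ)),
    (∀ v ∈ 𝒱, ∀ j ∉ A, v j = 0) →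
    ∀ (τ : LinearOrder (Mon n)), IsTermOrder τ →
    (∀ i ∈ A, ProfileExact A i 𝒱 (greedy τ 𝒱 (MS A))) →
    ∀ (lin : LinearOrder (Mon n)), IsTermOrder lin → SeqGraded lin A →
    greedy lin 𝒱 (MS A) = greedy τ 𝒱 (MS A) := by
  intro N
  induction N using Nat.strong_induction_on with
  | _ N IH =>
    intro A hAcard 𝒱 h𝒱 τ hτ hex lin hlin hseq
    rcases A.eq_empty_or_nonempty with rfl | hA
    · -- base case
      ext m
      rw [MS_empty]
      have hempty : ∀ lin' : LinearOrder (Mon n),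
          {r | r ∈ ({0} : Set (Mon n)) ∧ lin'.lt r m} = ∅ ∨ m ≠ 0 := by
        intro lin'
        rcases eq_or_ne m 0 with rfl | hne
        · left
          ext r
          simp only [Set.mem_setOf_eq, Set.mem_singleton_iff, Set.mem_empty_iff_false,
            iff_false, not_and]
          rintro rfl
          exact tlt_irrefl lin'
        · right
          exact hne
      rcases eq_or_ne m 0 with rfl | hne
      · have e1 : {r | r ∈ ({0} : Set (Mon n)) ∧ lin.lt r 0} = ∅ := by
          rcases hempty lin with h | h
          · exact h
          · exact absurd rfl h
        have e2 : {r | r ∈ ({0} : Set (Mon n)) ∧ τ.lt r 0} = ∅ := by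
          rcases hempty τ with h | h
          · exact h
          · exact absurd rfl h
        constructor
        · rintro ⟨h1, h2⟩
          rw [e1] at h2
          rw [greedy]
          refine ⟨h1, ?_⟩
          rw [e2]
          exact h2
        · rintro ⟨h1, h2⟩
          rw [e2] at h2
          refine ⟨h1, ?_⟩
          rw [e1]
          exact h2
      · constructor
        · rintro ⟨h1, _⟩
          exact absurd (Set.mem_singleton_iff.1 h1) hne
        · rintro ⟨h1, _⟩
          exact absurd (Set.mem_singleton_iff.1 h1) hne
    · -- inductive step
      cases hseq with
      | empty => exact absurd rfl (Finset.nonempty_iff_ne_empty.1 hA)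
      | step i hiA hglin hseq' =>
        set A' := A.erase i with hA'
        have hiA' : i ∉ A' := Finset.notMem_erase i A
        set ρ := refine τ i with hρ
        have hρterm : IsTermOrder ρ := refine_term hτ
        have hTρ : greedy ρ 𝒱 (MS A) = greedy τ 𝒱 (MS A) :=
          claimA τ ρ hτ hρterm (fun _ _ => refine_lt) (hex i hiA)
        -- section exactness data
        have hsec : ∀ d : ℕ, ∀ j ∈ A', ProfileExact A' j (secW 𝒱 i d)
            (greedy ρ (secW 𝒱 i d) (MS A')) := by
          intro d j hjA'
          have hjA : j ∈ A := Finset.mem_of_mem_erase hjA'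
          set τj := refine τ j with hτj
          set σ2 := refine τj i with hσ2
          have hτjterm : IsTermOrder τj := refine_term hτ
          have hσ2term : IsTermOrder σ2 := refine_term hτjterm
          have h1 : greedy τj 𝒱 (MS A) = greedy τ 𝒱 (MS A) :=
            claimA τ τj hτ hτjterm (fun _ _ => refine_lt) (hex j hjA)
          have h2 : greedy σ2 𝒱 (MS A) = greedy τj 𝒱 (MS A) := by
            refine claimA τj σ2 hτjterm hσ2term (fun _ _ => refine_lt) ?_
            rw [h1]
            exact hex i hiA
          have h3 : greedy σ2 𝒱 (MS A) = greedy ρ 𝒱 (MS A) := by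
            rw [h2, h1, hTρ]
          -- transfer to the section
          have h4 : greedy σ2 (secW 𝒱 i d) (MS A')
              = greedy ρ (secW 𝒱 i d) (MS A') := by
            ext t
            by_cases htA' : t ∈ MS A'
            · rw [← decomp hiA σ2 hσ2term refine_graded 𝒱 h𝒱 t htA' d,
                ← decomp hiA ρ hρterm refine_graded 𝒱 h𝒱 t htA' d, h3]
            · constructor
              · intro hc
                exact absurd (greedy_subset_region hc) htA'
              · intro hc
                exact absurd (greedy_subset_region hc) htA'
          have h5 : GradedOn A' j σ2 := by
            intro u v hu hv huv
            rw [hσ2, refine_lt]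
            right
            constructor
            · rw [hu i hiA', hv i hiA']
            · rw [hτj, refine_lt]
              exact Or.inl huv
          have h6 := graded_profileExact (𝒱 := secW 𝒱 i d) (term_wf σ2 hσ2term) h5
          rwa [h4] at h6
        -- the strata equality by the induction hypothesis
        have hstrata : ∀ d : ℕ, greedy lin (secW 𝒱 i d) (MS A')
            = greedy ρ (secW 𝒱 i d) (MS A') := by
          intro d
          refine IH A'.card ?_ A' rfl (secW 𝒱 i d)
            (fun u hu => secW_supported h𝒱 hu) ρ hρterm (hsec d) lin hlin hseq'
          rw [hA', Finset.card_erase_of_mem hiA, ← hAcard]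
          have := Finset.card_pos.2 hA
          omega
        -- conclude
        have hfin : greedy lin 𝒱 (MS A) = greedy ρ 𝒱 (MS A) := by
          ext m
          by_cases hmA : m ∈ MS A
          · have ht : Finsupp.erase i m ∈ MS A' := MS_erase_mem hmA
            have e : Finsupp.erase i m + Finsupp.single i (m i) = m :=
              Finsupp.erase_add_single i m
            rw [← e]
            rw [decomp hiA lin hlin hglin 𝒱 h𝒱 _ ht (m i),
              decomp hiA ρ hρterm refine_graded 𝒱 h𝒱 _ ht (m i), hstrata (m i)]
          · constructor
            · intro hc
              exact absurd (greedy_subset_region hc) hmA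
            · intro hc
              exact absurd (greedy_subset_region hc) hmA
        rw [hfin, hTρ]

end NEDO
namespace NEDO

variable {n : ℕ}

theorem elim_gradedOn {lin : LinearOrder (Mon n)} {i : Fin n} (h : IsElimOrder lin i)
    (A : Finset (Fin n)) : GradedOn A i lin := fun _ _ _ _ huv => elim_graded h huv

theorem stdMon_allEq (hsub : ∀ f g : Mon n, f = g) (lin₁ lin₂ : LinearOrder (Mon n))
    (I : Ideal (MvPolynomial (Fin n) ℚ)) : stdMon lin₁ I = stdMon lin₂ I := by
  have key : ∀ (lin : LinearOrder (Mon n)) (f : MvPolynomial (Fin n) ℚ) (m : Mon n),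
      IsLeadMon lin f m ↔ m ∈ f.support := by
    intro lin f m
    constructor
    · exact fun h => h.1
    · intro h
      refine ⟨h, fun m' _ => ?_⟩
      rw [hsub m' m]
      exact lin.le_refl m
  ext m
  constructor
  · intro h hx
    obtain ⟨f, hf, hf0, hl⟩ := hx
    exact h ⟨f, hf, hf0, (key lin₁ f m).2 ((key lin₂ f m).1 hl)⟩
  · intro h hx
    obtain ⟨f, hf, hf0, hl⟩ := hx
    exact h ⟨f, hf, hf0, (key lin₂ f m).2 ((key lin₁ f m).1 hl)⟩

end NEDO

theorem not_extremal_exists_differing_elimination_orders' {n k : ℕ}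
    (V : Finset (Fin n → Fin k))
    (lin : Fin n → LinearOrder (Mon n)) (hlin : ∀ i : Fin n, IsElimOrder (lin i) i)
    (hne : ¬ IsExtremal ((V.image (toField ℚ) : Finset (Fin n → ℚ)) : Set (Fin n → ℚ))) :
    ∃ i j : Fin n, i ≠ j ∧
      stdMon (lin i) (vanishIdeal ((V.image (toField ℚ) : Finset (Fin n → ℚ)) :
          Set (Fin n → ℚ))) ≠
        stdMon (lin j) (vanishIdeal ((V.image (toField ℚ) : Finset (Fin n → ℚ)) :
          Set (Fin n → ℚ))) := by
  classical
  by_contra hcon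
  push_neg at hcon
  rw [IsExtremal] at hne
  push_neg at hne
  obtain ⟨σ₁, σ₂, lin₁, lin₂, h₁, h₂, hne'⟩ := hne
  set 𝒱 := V.image (toField ℚ) with h𝒱
  rcases Nat.eq_zero_or_pos n with h0 | hpos
  · refine hne' (NEDO.stdMon_allEq ?_ lin₁ lin₂ _)
    intro f g
    ext a
    exact absurd a.isLt (by omega)
  · set i0 : Fin n := ⟨0, hpos⟩ with hi0
    have hS : ∀ i : Fin n, stdMon (lin i) (vanishIdeal (𝒱 : Set (Fin n → ℚ)))
        = stdMon (lin i0) (vanishIdeal (𝒱 : Set (Fin n → ℚ))) := by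
      intro i
      rcases eq_or_ne i i0 with rfl | hne2
      · rfl
      · exact hcon i i0 hne2
    have hMS : (NEDO.MS (Finset.univ : Finset (Fin n))) = (Set.univ : Set (Mon n)) :=
      NEDO.MS_univ
    have hg : ∀ i : Fin n, NEDO.greedy (lin i) 𝒱 (NEDO.MS Finset.univ)
        = NEDO.greedy (lin i0) 𝒱 (NEDO.MS Finset.univ) := by
      intro i
      rw [hMS, ← NEDO.stdMon_eq_greedy, ← NEDO.stdMon_eq_greedy]
      exact hS i
    have hex : ∀ i ∈ (Finset.univ : Finset (Fin n)),
        NEDO.ProfileExact Finset.univ i 𝒱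
          (NEDO.greedy (lin i0) 𝒱 (NEDO.MS Finset.univ)) := by
      intro i _
      rw [← hg i]
      exact NEDO.graded_profileExact (NEDO.term_wf _ (hlin i).1)
        (NEDO.elim_gradedOn (hlin i) _)
    have hlex : ∀ (σ : Equiv.Perm (Fin n)) (l : LinearOrder (Mon n)), IsLexOrder σ l →
        stdMon l (vanishIdeal (𝒱 : Set (Fin n → ℚ)))
          = stdMon (lin i0) (vanishIdeal (𝒱 : Set (Fin n → ℚ))) := by
      intro σ l hl
      rw [NEDO.stdMon_eq_greedy, NEDO.stdMon_eq_greedy, ← hMS]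
      exact NEDO.main (Finset.univ : Finset (Fin n)).card Finset.univ rfl 𝒱
        (fun v _ j hj => absurd (Finset.mem_univ j) hj)
        (lin i0) (hlin i0).1 hex l (NEDO.lex_term hl) (NEDO.lex_seqGraded hl _)
    exact hne' ((hlex σ₁ lin₁ h₁).trans (hlex σ₂ lin₂ h₂).symm)
/-- Theorem `genalgothm`.
For each `i` let `≺ᵢ` be an elimination order with respect to `xᵢ`. If a finite point
set `𝒱 ⊆ {0,…,k-1}^n` is not extremal, then among `≺₁,…,≺ₙ` there are two term orders
for which the standard monomials of `I(𝒱)` differ. -/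
theorem not_extremal_exists_differing_elimination_orders {n k : ℕ}
    (V : Finset (Fin n → Fin k))
    (lin : Fin n → LinearOrder (Mon n)) (hlin : ∀ i : Fin n, IsElimOrder (lin i) i)
    (hne : ¬ IsExtremal ((V.image (toField ℚ) : Finset (Fin n → ℚ)) : Set (Fin n → ℚ))) :
    ∃ i j : Fin n, i ≠ j ∧
      stdMon (lin i) (vanishIdeal ((V.image (toField ℚ) : Finset (Fin n → ℚ)) :
          Set (Fin n → ℚ))) ≠
        stdMon (lin j) (vanishIdeal ((V.image (toField ℚ) : Finset (Fin n → ℚ)) :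
          Set (Fin n → ℚ))) := by
  exact not_extremal_exists_differing_elimination_orders' V lin hlin hne
end

section
/- Let 𝔽 be an arbitrary field and for each 1 ≤ i ≤ n let ≺_i be an elimination order with respect to the variable x_i on the monomials of 𝔽[x_1,…,x_n]. Then for any zero dimensional ideal I ⊴ 𝔽[x_1,…,x_n], the set of standard monomials Sm(I) is the same for every term order if and only if it is the same for the n term orders ≺_1,…,≺_n. -/
open MvPolynomial

section AuxTO

variable {n : ℕ}

private lemma TO.le_refl' (lin : LinearOrder (Mon n)) (a : Mon n) : lin.le a a :=
  @_root_.le_refl _ lin.toPreorder a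

private lemma TO.le_trans' (lin : LinearOrder (Mon n)) {a b c : Mon n}
    (h1 : lin.le a b) (h2 : lin.le b c) : lin.le a c :=
  @_root_.le_trans _ lin.toPreorder a b c h1 h2

private lemma TO.le_of_lt' (lin : LinearOrder (Mon n)) {a b : Mon n}
    (h : lin.lt a b) : lin.le a b :=
  ((@_root_.lt_iff_le_not_ge _ lin.toPreorder a b).1 h).1

private lemma TO.not_le_of_lt' (lin : LinearOrder (Mon n)) {a b : Mon n}
    (h : lin.lt a b) : ¬ lin.le b a :=
  ((@_root_.lt_iff_le_not_ge _ lin.toPreorder a b).1 h).2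

private lemma TO.lt_of_le_ne' (lin : LinearOrder (Mon n)) {a b : Mon n}
    (hle : lin.le a b) (hne : a ≠ b) : lin.lt a b := by
  refine (@_root_.lt_iff_le_not_ge _ lin.toPreorder a b).2 ⟨hle, fun hba => ?_⟩
  exact hne (@_root_.le_antisymm _ lin.toPartialOrder a b hle hba)

private lemma TO.lt_of_lt_of_le' (lin : LinearOrder (Mon n)) {a b c : Mon n}
    (h1 : lin.lt a b) (h2 : lin.le b c) : lin.lt a c :=
  @_root_.lt_of_lt_of_le _ lin.toPreorder a b c h1 h2

/-- Pointwise (divisibility) order implies any term order. -/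
private lemma TO.le_of_pointwise (lin : LinearOrder (Mon n)) (h : IsTermOrder lin)
    {u v : Mon n} (huv : u ≤ v) : lin.le u v := by
  have key : u + (v - u) = v := add_tsub_cancel_of_le huv
  have h1 := h.2 0 (v - u) u (h.1 (v - u))
  rw [zero_add, add_comm (v - u) u, key] at h1
  exact h1

private lemma TO.add_lt_add_right' (lin : LinearOrder (Mon n)) (h : IsTermOrder lin)
    {u v : Mon n} (w : Mon n) (huv : lin.lt u v) : lin.lt (u + w) (v + w) := by
  refine TO.lt_of_le_ne' lin (h.2 u v w (TO.le_of_lt' lin huv)) fun he => ?_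
  have huv' : u = v := add_right_cancel he
  exact TO.not_le_of_lt' lin huv (huv' ▸ TO.le_refl' lin v)

/-- Any term order is well founded (Dickson's lemma). -/
private lemma TO.wf (lin : LinearOrder (Mon n)) (h : IsTermOrder lin) :
    WellFounded lin.lt := by
  rw [RelEmbedding.wellFounded_iff_isEmpty]
  constructor
  intro emb
  obtain ⟨a, b, hab, hle⟩ :=
    wellQuasiOrdered_le (α := Mon n) (fun k => emb k)
  have h1 : lin.lt (emb b) (emb a) := emb.map_rel_iff.2 hab
  exact TO.not_le_of_lt' lin h1 (TO.le_of_pointwise lin h hle)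

/-- In an elimination order w.r.t. `xᵢ`, a larger `i`-th exponent forces a larger monomial. -/
private lemma TO.elim_lt (lin : LinearOrder (Mon n)) {i : Fin n} (h : IsElimOrder lin i)
    {w s : Mon n} (hi : w i < s i) : lin.lt w s := by
  have h1 : lin.lt (w.erase i) (Finsupp.single i 1) := h.2 (w.erase i) Finsupp.erase_same
  have h2 : lin.lt (w.erase i + Finsupp.single i (w i))
      (Finsupp.single i 1 + Finsupp.single i (w i)) :=
    TO.add_lt_add_right' lin h.1 _ h1
  have e1 : w.erase i + Finsupp.single i (w i) = w := by
    rw [add_comm]; exact Finsupp.single_add_erase i w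
  have e2 : Finsupp.single i 1 + Finsupp.single i (w i) = Finsupp.single i (w i + 1) := by
    rw [← Finsupp.single_add, add_comm]
  rw [e1, e2] at h2
  have h3 : lin.le (Finsupp.single i (w i + 1)) s := by
    apply TO.le_of_pointwise lin h.1
    rw [Finsupp.single_le_iff]
    exact hi
  exact TO.lt_of_lt_of_le' lin h2 h3

variable {F : Type*} [Field F]

/-- A nonzero polynomial supported on standard monomials cannot lie in `I`. -/
private lemma TO.stdSupported_eq_zero (lin : LinearOrder (Mon n))
    (I : Ideal (MvPolynomial (Fin n) F)) {g : MvPolynomial (Fin n) F}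
    (hs : ∀ m ∈ g.support, m ∈ stdMon lin I) (hgI : g ∈ I) : g = 0 := by
  by_contra h0
  have hne : g.support.Nonempty :=
    Finset.nonempty_iff_ne_empty.2 fun h => h0 (MvPolynomial.support_eq_empty.1 h)
  set M := @Finset.max' _ lin g.support hne with hM
  have hMmem : M ∈ g.support := @Finset.max'_mem _ lin g.support hne
  exact hs M hMmem ⟨g, hgI, h0, hMmem, fun m' hm' => @Finset.le_max' _ lin g.support m' hm'⟩

/-- Reduction modulo `I`: every polynomial bounded by `m` is congruent mod `I` to one
supported on standard monomials and still bounded by `m`. -/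
private lemma TO.reduce (lin : LinearOrder (Mon n)) (hlin : IsTermOrder lin)
    (I : Ideal (MvPolynomial (Fin n) F)) (m : Mon n) :
    ∀ f : MvPolynomial (Fin n) F, (∀ m' ∈ f.support, lin.le m' m) →
      ∃ g : MvPolynomial (Fin n) F, (∀ m' ∈ g.support, m' ∈ stdMon lin I) ∧
        f - g ∈ I ∧ ∀ m' ∈ g.support, lin.le m' m := by
  classical
  refine (TO.wf lin hlin).induction
    (C := fun m => ∀ f : MvPolynomial (Fin n) F, (∀ m' ∈ f.support, lin.le m' m) →
      ∃ g : MvPolynomial (Fin n) F, (∀ m' ∈ g.support, m' ∈ stdMon lin I) ∧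
        f - g ∈ I ∧ ∀ m' ∈ g.support, lin.le m' m) m ?_
  clear m
  intro m IH f hf
  by_cases hf0 : f = 0
  · exact ⟨0, by simp, by simp [hf0, I.zero_mem], by simp⟩
  have hsupp : f.support.Nonempty :=
    Finset.nonempty_iff_ne_empty.2 fun h => hf0 (MvPolynomial.support_eq_empty.1 h)
  set M := @Finset.max' _ lin f.support hsupp with hMdef
  have hMmem : M ∈ f.support := @Finset.max'_mem _ lin f.support hsupp
  have hMm : lin.le M m := hf M hMmem
  have hMmax : ∀ m' ∈ f.support, lin.le m' M :=
    fun m' h => @Finset.le_max' _ lin f.support m' h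
  by_cases hstd : M ∈ stdMon lin I
  · -- leading monomial is standard: split it off
    set c := MvPolynomial.coeff M f with hc
    have hc0 : c ≠ 0 := MvPolynomial.mem_support_iff.1 hMmem
    set f' := f - MvPolynomial.monomial M c with hf'
    have hcoeffM : MvPolynomial.coeff M f' = 0 := by
      simp [hf', MvPolynomial.coeff_sub, MvPolynomial.coeff_monomial, hc]
    have hsub : ∀ m' ∈ f'.support, lin.lt m' M := by
      intro m' hm'
      have hne : m' ≠ M := by
        intro h; rw [h] at hm'; exact MvPolynomial.mem_support_iff.1 hm' hcoeffM
      have hmem : m' ∈ f.support := by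
        rw [MvPolynomial.mem_support_iff] at hm' ⊢
        intro h0
        apply hm'
        simp [hf', MvPolynomial.coeff_sub, MvPolynomial.coeff_monomial, h0,
          Ne.symm hne]
      exact TO.lt_of_le_ne' lin (hMmax m' hmem) hne
    by_cases hf'0 : f' = 0
    · refine ⟨MvPolynomial.monomial M c, ?_, ?_, ?_⟩
      · intro m' hm'
        rw [MvPolynomial.support_monomial, if_neg hc0, Finset.mem_singleton] at hm'
        exact hm' ▸ hstd
      · have : f - MvPolynomial.monomial M c = 0 := hf' ▸ hf'0
        rw [this]; exact I.zero_mem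
      · intro m' hm'
        rw [MvPolynomial.support_monomial, if_neg hc0, Finset.mem_singleton] at hm'
        exact hm' ▸ hMm
    have hsupp' : f'.support.Nonempty :=
      Finset.nonempty_iff_ne_empty.2 fun h => hf'0 (MvPolynomial.support_eq_empty.1 h)
    set M' := @Finset.max' _ lin f'.support hsupp' with hM'def
    have hM'mem : M' ∈ f'.support := @Finset.max'_mem _ lin f'.support hsupp'
    have hM'M : lin.lt M' M := hsub M' hM'mem
    have hM'm : lin.lt M' m := TO.lt_of_lt_of_le' lin hM'M hMm
    obtain ⟨g', hg'std, hg'I, hg'le⟩ := IH M' hM'm f'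
      (fun m' h => @Finset.le_max' _ lin f'.support m' h)
    refine ⟨g' + MvPolynomial.monomial M c, ?_, ?_, ?_⟩
    · intro m' hm'
      rcases Finset.mem_union.1 (MvPolynomial.support_add hm') with h | h
      · exact hg'std m' h
      · rw [MvPolynomial.support_monomial, if_neg hc0, Finset.mem_singleton] at h
        exact h ▸ hstd
    · have e : f - (g' + MvPolynomial.monomial M c) = f' - g' := by rw [hf']; ring
      rw [e]; exact hg'I
    · intro m' hm'
      rcases Finset.mem_union.1 (MvPolynomial.support_add hm') with h | h
      · exact TO.le_trans' lin (hg'le m' h) (TO.le_of_lt' lin hM'm)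
      · rw [MvPolynomial.support_monomial, if_neg hc0, Finset.mem_singleton] at h
        exact h ▸ hMm
  · -- leading monomial is not standard: reduce by an element of I
    have hex : ∃ h ∈ I, h ≠ 0 ∧ IsLeadMon lin h M := by
      by_contra hcon
      exact hstd hcon
    obtain ⟨h, hhI, hh0, hhM, hhmax⟩ := hex
    have hchM : MvPolynomial.coeff M h ≠ 0 := MvPolynomial.mem_support_iff.1 hhM
    set c := MvPolynomial.coeff M f / MvPolynomial.coeff M h with hc
    set f' := f - MvPolynomial.C c * h with hf'
    have hcoeffM : MvPolynomial.coeff M f' = 0 := by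
      simp [hf', MvPolynomial.coeff_sub, MvPolynomial.coeff_C_mul, hc,
        div_mul_cancel₀ _ hchM]
    have hsub : ∀ m' ∈ f'.support, lin.lt m' M := by
      intro m' hm'
      have hne : m' ≠ M := by
        intro hx; rw [hx] at hm'; exact MvPolynomial.mem_support_iff.1 hm' hcoeffM
      have hle : lin.le m' M := by
        have hcoeff : MvPolynomial.coeff m' f' ≠ 0 := MvPolynomial.mem_support_iff.1 hm'
        by_cases hmf : m' ∈ f.support
        · exact hMmax m' hmf
        · have h1 : MvPolynomial.coeff m' f = 0 := MvPolynomial.notMem_support_iff.1 hmf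
          have h2 : MvPolynomial.coeff m' h ≠ 0 := by
            intro h2
            apply hcoeff
            simp [hf', MvPolynomial.coeff_sub, MvPolynomial.coeff_C_mul, h1, h2]
          exact hhmax m' (MvPolynomial.mem_support_iff.2 h2)
      exact TO.lt_of_le_ne' lin hle hne
    by_cases hf'0 : f' = 0
    · refine ⟨0, by simp, ?_, by simp⟩
      have : f = MvPolynomial.C c * h := by
        have := sub_eq_zero.1 (hf' ▸ hf'0)
        exact this
      rw [sub_zero, this]
      exact I.mul_mem_left _ hhI
    have hsupp' : f'.support.Nonempty :=
      Finset.nonempty_iff_ne_empty.2 fun hx => hf'0 (MvPolynomial.support_eq_empty.1 hx)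
    set M' := @Finset.max' _ lin f'.support hsupp' with hM'def
    have hM'mem : M' ∈ f'.support := @Finset.max'_mem _ lin f'.support hsupp'
    have hM'M : lin.lt M' M := hsub M' hM'mem
    have hM'm : lin.lt M' m := TO.lt_of_lt_of_le' lin hM'M hMm
    obtain ⟨g', hg'std, hg'I, hg'le⟩ := IH M' hM'm f'
      (fun m' hx => @Finset.le_max' _ lin f'.support m' hx)
    refine ⟨g', hg'std, ?_, ?_⟩
    · have e : f - g' = (f' - g') + MvPolynomial.C c * h := by rw [hf']; ring
      rw [e]
      exact I.add_mem hg'I (I.mul_mem_left _ hhI)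
    · intro m' hm'
      exact TO.le_trans' lin (hg'le m' hm') (TO.le_of_lt' lin hM'm)

end AuxTO

/-- Theorem `LZDgen`.
Over an arbitrary field `𝔽`, for elimination orders `≺ᵢ` with respect to `xᵢ`
(`1 ≤ i ≤ n`), the standard monomials of a zero dimensional ideal
`I ⊴ 𝔽[x₁,…,xₙ]` are the same for every term order if and only if they are the same
for `≺₁,…,≺ₙ`. -/
theorem zeroDim_stdMon_allOrders_iff_eliminationOrders {n : ℕ} {F : Type*} [Field F]
    (lin : Fin n → LinearOrder (Mon n)) (hlin : ∀ i : Fin n, IsElimOrder (lin i) i)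
    (I : Ideal (MvPolynomial (Fin n) F))
    (hI : FiniteDimensional F (MvPolynomial (Fin n) F ⧸ I)) :
    (∀ lin₁ lin₂ : LinearOrder (Mon n), IsTermOrder lin₁ → IsTermOrder lin₂ →
        stdMon lin₁ I = stdMon lin₂ I) ↔
      ∀ i j : Fin n, stdMon (lin i) I = stdMon (lin j) I := by
  constructor
  · intro H i j
    exact H (lin i) (lin j) (hlin i).1 (hlin j).1
  · intro hsame lin₁ lin₂ h₁ h₂
    classical
    rcases Nat.eq_zero_or_pos n with hn | hn
    · -- trivial case n = 0 : all monomials are equal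
      subst hn
      haveI : Subsingleton (Mon 0) := ⟨fun f g => Finsupp.ext fun a => a.elim0⟩
      have hkey : ∀ (l₁ l₂ : LinearOrder (Mon 0)) (f : MvPolynomial (Fin 0) F)
          (m : Mon 0), IsLeadMon l₁ f m → IsLeadMon l₂ f m := by
        rintro l₁ l₂ f m ⟨hm, _⟩
        exact ⟨hm, fun m' _ => (Subsingleton.elim m' m) ▸ TO.le_refl' l₂ m⟩
      ext m
      simp only [stdMon, Set.mem_setOf_eq, not_iff_not]
      constructor
      · rintro ⟨f, hfI, hf0, hlead⟩; exact ⟨f, hfI, hf0, hkey _ _ _ _ hlead⟩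
      · rintro ⟨f, hfI, hf0, hlead⟩; exact ⟨f, hfI, hf0, hkey _ _ _ _ hlead⟩
    · -- main case
      set i0 : Fin n := ⟨0, hn⟩ with hi0
      set S := stdMon (lin i0) I with hSdef
      have hSi : ∀ i, stdMon (lin i) I = S := fun i => hsame i i0
      -- construction of degree dominated polynomials for monomials outside S
      have key : ∀ w : Mon n, w ∉ S → ∃ f ∈ I, MvPolynomial.coeff w f = 1 ∧
          ∀ v ∈ f.support, v ≤ w := by
        intro w hw
        have hmono : ∀ (l : LinearOrder (Mon n)),
            ∀ m' ∈ (MvPolynomial.monomial w (1 : F)).support, l.le m' w := by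
          intro l m' hm'
          rw [MvPolynomial.support_monomial, if_neg (one_ne_zero (α := F)),
            Finset.mem_singleton] at hm'
          exact hm' ▸ TO.le_refl' l w
        have hred : ∀ i : Fin n, ∃ g : MvPolynomial (Fin n) F,
            (∀ m' ∈ g.support, m' ∈ S) ∧
            (MvPolynomial.monomial w (1 : F)) - g ∈ I ∧
            ∀ m' ∈ g.support, (lin i).le m' w := by
          intro i
          obtain ⟨g, hg1, hg2, hg3⟩ :=
            TO.reduce (lin i) (hlin i).1 I w (MvPolynomial.monomial w 1) (hmono (lin i))
          exact ⟨g, fun m' hm' => (hSi i) ▸ hg1 m' hm', hg2, hg3⟩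
        choose g hgS hgI hgle using hred
        have hgeq : ∀ i, g i = g i0 := by
          intro i
          have hdiff : g i0 - g i ∈ I := by
            have := I.sub_mem (hgI i) (hgI i0)
            have e : (MvPolynomial.monomial w (1 : F) - g i) -
                (MvPolynomial.monomial w (1 : F) - g i0) = g i0 - g i := by ring
            rwa [e] at this
          have h0 : g i0 - g i = 0 := by
            refine TO.stdSupported_eq_zero (lin i0) I (fun m hm => ?_) hdiff
            rcases Finset.mem_union.1 (MvPolynomial.support_sub _ _ _ hm) with h | h
            · exact hSdef ▸ hgS i0 m h
            · exact hSdef ▸ hgS i m h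
          exact (sub_eq_zero.1 h0).symm
        refine ⟨MvPolynomial.monomial w 1 - g i0, hgI i0, ?_, ?_⟩
        · have hwg : MvPolynomial.coeff w (g i0) = 0 := by
            rw [← MvPolynomial.notMem_support_iff]
            exact fun h => hw (hgS i0 w h)
          simp [MvPolynomial.coeff_sub, MvPolynomial.coeff_monomial, hwg]
        · intro v hv
          rcases Finset.mem_union.1 (MvPolynomial.support_sub _ _ _ hv) with h | h
          · rw [MvPolynomial.support_monomial, if_neg (one_ne_zero (α := F)),
              Finset.mem_singleton] at h
            exact h ▸ le_refl w
          · rw [Finsupp.le_def]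
            intro k
            by_contra hk
            push_neg at hk
            have hlt : (lin k).lt w v := TO.elim_lt (lin k) (hlin k) hk
            have hle : (lin k).le v w := by
              have : v ∈ (g k).support := (hgeq k).symm ▸ h
              exact hgle k v this
            exact TO.not_le_of_lt' (lin k) hlt hle
      -- every term order has standard monomials equal to S
      have main : ∀ (l : LinearOrder (Mon n)), IsTermOrder l → stdMon l I = S := by
        intro l hl
        have hsubset : stdMon l I ⊆ S := by
          intro m hm
          by_contra hmS
          obtain ⟨f, hfI, hf1, hfdiv⟩ := key m hmS
          refine hm ⟨f, hfI, ?_, ?_, ?_⟩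
          · intro h0; rw [h0] at hf1; simp at hf1
          · exact MvPolynomial.mem_support_iff.2 (by rw [hf1]; exact one_ne_zero)
          · exact fun m' hm' => TO.le_of_pointwise l hl (hfdiv m' hm')
        refine Set.Subset.antisymm hsubset fun s hs => ?_
        by_contra hsl
        obtain ⟨g', hg'S, hg'I, _⟩ := TO.reduce l hl I s (MvPolynomial.monomial s 1)
          (by
            intro m' hm'
            rw [MvPolynomial.support_monomial, if_neg (one_ne_zero (α := F)),
              Finset.mem_singleton] at hm'
            exact hm' ▸ TO.le_refl' l s)
        have hssup : s ∉ g'.support := fun h => hsl (hg'S s h)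
        have hg0 : MvPolynomial.monomial s (1 : F) - g' = 0 := by
          refine TO.stdSupported_eq_zero (lin i0) I (fun m hm => ?_) hg'I
          rcases Finset.mem_union.1 (MvPolynomial.support_sub _ _ _ hm) with h | h
          · rw [MvPolynomial.support_monomial, if_neg (one_ne_zero (α := F)),
              Finset.mem_singleton] at h
            exact hSdef ▸ h ▸ hs
          · exact hSdef ▸ hsubset (hg'S m h)
        have hcontr : MvPolynomial.coeff s (MvPolynomial.monomial s (1 : F) - g') = 1 := by
          rw [MvPolynomial.coeff_sub, MvPolynomial.notMem_support_iff.1 hssup]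
          simp [MvPolynomial.coeff_monomial]
        rw [hg0] at hcontr
        simp at hcontr
      rw [main lin₁ h₁, main lin₂ h₂]
end

section
/- Let 𝔽 be a field and 𝒱 ⊆ 𝔽^n a finite point set, and suppose that the set of standard monomials of I(𝒱) is the same family 𝒮 for every lexicographic term order. Then for every monomial x^u ∉ 𝒮 there exists a polynomial f ∈ I(𝒱) of the form f = x^u + Σ_{x^v ∈ 𝒮} α_v x^v which is degree dominated with dominating term x^u; in particular every monomial of f other than x^u divides x^u, and lm(f) = x^u with respect to every term order. -/
open MvPolynomial

section AuxForStatement7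

noncomputable def lexLin {n : ℕ} (σ : Equiv.Perm (Fin n)) : LinearOrder (Mon n) :=
  LinearOrder.lift' (fun u : Mon n => toLex (Finsupp.equivMapDomain σ.symm u))
    (fun a b h => by
      ext i
      have := congrArg (fun x : Lex (Fin n →₀ ℕ) => ofLex x (σ.symm i)) h
      simpa [Finsupp.equivMapDomain_apply] using this)

lemma lexLin_isLex {n : ℕ} (σ : Equiv.Perm (Fin n)) : IsLexOrder σ (lexLin σ) := by
  intro u v
  show (toLex (Finsupp.equivMapDomain σ.symm u) < toLex (Finsupp.equivMapDomain σ.symm v)) ↔ _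
  rw [Finsupp.Lex.lt_iff]
  constructor
  · rintro ⟨i, hji, hi⟩
    exact ⟨i, by simpa [Finsupp.equivMapDomain_apply] using hi,
      fun j hj => by simpa [Finsupp.equivMapDomain_apply] using hji j hj⟩
  · rintro ⟨i, hi, hji⟩
    exact ⟨i, fun j hj => by simpa [Finsupp.equivMapDomain_apply] using hji j hj,
      by simpa [Finsupp.equivMapDomain_apply] using hi⟩

lemma lexLin_wf {n : ℕ} (σ : Equiv.Perm (Fin n)) : WellFounded (lexLin σ).lt := by
  have h : WellFounded ((· < ·) : Lex (Fin n →₀ ℕ) → Lex (Fin n →₀ ℕ) → Prop) :=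
    (Finsupp.Lex.wellFoundedLT).wf
  exact InvImage.wf (fun u : Mon n => toLex (Finsupp.equivMapDomain σ.symm u)) h

lemma lo_lt_iff {α : Type*} (lin : LinearOrder α) {a b : α} :
    lin.lt a b ↔ lin.le a b ∧ a ≠ b := by
  letI := lin; exact lt_iff_le_and_ne

lemma lo_le_of_lt {α : Type*} (lin : LinearOrder α) {a b : α} (h : lin.lt a b) :
    lin.le a b := by letI := lin; exact le_of_lt h

lemma lo_not_le_of_lt {α : Type*} (lin : LinearOrder α) {a b : α} (h : lin.lt a b) :
    ¬ lin.le b a := by letI := lin; exact not_le_of_gt h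

lemma lo_trans {α : Type*} (lin : LinearOrder α) {a b c : α}
    (h : lin.lt a b) (h' : lin.lt b c) : lin.lt a c := by
  letI := lin; exact lt_trans h h'

lemma lo_exists_max {α : Type*} (lin : LinearOrder α) (s : Finset α)
    (hs : s.Nonempty) : ∃ m ∈ s, ∀ a ∈ s, lin.le a m := by
  letI := lin
  obtain ⟨m, hm, h⟩ := s.exists_max_image id hs
  exact ⟨m, hm, h⟩

lemma lemA_reduce {n : ℕ} {F : Type*} [Field F] (I : Ideal (MvPolynomial (Fin n) F))
    (lin : LinearOrder (Mon n)) (hwf : WellFounded lin.lt) (u : Mon n)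
    (hu : u ∉ stdMon lin I) :
    ∃ f ∈ I, MvPolynomial.coeff u f = 1 ∧
      ∀ v ∈ f.support, v ≠ u → v ∈ stdMon lin I ∧ lin.lt v u := by
  classical
  revert hu
  refine hwf.induction (C := fun u => u ∉ stdMon lin I →
    ∃ f ∈ I, MvPolynomial.coeff u f = 1 ∧
      ∀ v ∈ f.support, v ≠ u → v ∈ stdMon lin I ∧ lin.lt v u) u ?_
  clear u
  intro u IH hu
  rw [stdMon, Set.mem_setOf_eq, not_not] at hu
  obtain ⟨g, hgI, hg0, hgu, hglead⟩ := hu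
  have hcu : MvPolynomial.coeff u g ≠ 0 := MvPolynomial.mem_support_iff.mp hgu
  set c : F := MvPolynomial.coeff u g with hc
  set T : Finset (Mon n) := g.support.filter (fun v => v ≠ u ∧ v ∉ stdMon lin I) with hT
  have hTlt : ∀ v ∈ T, lin.lt v u := by
    intro v hv
    rw [hT, Finset.mem_filter] at hv
    exact (lo_lt_iff lin).mpr ⟨hglead v hv.1, hv.2.1⟩
  have hTns : ∀ v ∈ T, v ∉ stdMon lin I := fun v hv => ((Finset.mem_filter.mp hv).2).2
  choose! fv hfvI hfv1 hfvS using fun v (hv : v ∈ T) => IH v (hTlt v hv) (hTns v hv)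
  set f : MvPolynomial (Fin n) F :=
    c⁻¹ • g - ∑ v ∈ T, (c⁻¹ * MvPolynomial.coeff v g) • fv v with hf
  have hfI : f ∈ I := by
    refine sub_mem ?_ (Submodule.sum_mem I fun v hv => ?_)
    · rw [MvPolynomial.smul_eq_C_mul]; exact I.mul_mem_left _ hgI
    · rw [MvPolynomial.smul_eq_C_mul]; exact I.mul_mem_left _ (hfvI v hv)
  have hcoeff : ∀ w, MvPolynomial.coeff w f =
      c⁻¹ * MvPolynomial.coeff w g - ∑ v ∈ T,
        (c⁻¹ * MvPolynomial.coeff v g) * MvPolynomial.coeff w (fv v) := by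
    intro w
    simp [hf, MvPolynomial.coeff_sub, MvPolynomial.coeff_smul, MvPolynomial.coeff_sum,
      smul_eq_mul]
  have hfvnot : ∀ v ∈ T, ∀ w, w ≠ v → w ∉ stdMon lin I →
      MvPolynomial.coeff w (fv v) = 0 := by
    intro v hv w hwv hws
    by_contra h
    exact hws ((hfvS v hv w (MvPolynomial.mem_support_iff.mpr h) hwv).1)
  have hfvu : ∀ v ∈ T, MvPolynomial.coeff u (fv v) = 0 := by
    intro v hv
    by_contra h
    have hne : u ≠ v := fun e => ((Finset.mem_filter.mp hv).2.1 e.symm)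
    have hlt := (hfvS v hv u (MvPolynomial.mem_support_iff.mpr h) hne).2
    exact lo_not_le_of_lt lin (hTlt v hv) (lo_le_of_lt lin hlt)
  have hfu : MvPolynomial.coeff u f = 1 := by
    rw [hcoeff, Finset.sum_eq_zero (fun v hv => by rw [hfvu v hv, mul_zero])]
    simp [← hc, inv_mul_cancel₀ hcu]
  have hzero : ∀ w, w ≠ u → w ∉ stdMon lin I → MvPolynomial.coeff w f = 0 := by
    intro w hwu hws
    rw [hcoeff]
    by_cases hwT : w ∈ T
    · rw [Finset.sum_eq_single w
        (fun v hv hvw => by rw [hfvnot v hv w (Ne.symm hvw) hws, mul_zero])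
        (fun h => absurd hwT h)]
      rw [hfv1 w hwT, mul_one, sub_self]
    · have hwg : MvPolynomial.coeff w g = 0 := by
        by_contra h
        exact hwT (Finset.mem_filter.mpr ⟨MvPolynomial.mem_support_iff.mpr h, hwu, hws⟩)
      rw [hwg, mul_zero, Finset.sum_eq_zero (fun v hv => by
        rw [hfvnot v hv w (fun e => hwT (by rw [e]; exact hv)) hws, mul_zero])]
      simp
  refine ⟨f, hfI, hfu, ?_⟩
  intro v hvs hvu
  have hvS : v ∈ stdMon lin I := by
    by_contra h
    exact MvPolynomial.mem_support_iff.mp hvs (hzero v hvu h)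
  refine ⟨hvS, ?_⟩
  have hcv := MvPolynomial.mem_support_iff.mp hvs
  rw [hcoeff] at hcv
  by_cases hvg : MvPolynomial.coeff v g = 0
  · have hex : ∃ w ∈ T,
        (c⁻¹ * MvPolynomial.coeff w g) * MvPolynomial.coeff v (fv w) ≠ 0 := by
      by_contra h
      push_neg at h
      rw [Finset.sum_eq_zero h, hvg, mul_zero, sub_zero] at hcv
      exact hcv rfl
    obtain ⟨w, hwT, hne⟩ := hex
    have hcoef : MvPolynomial.coeff v (fv w) ≠ 0 := fun h => hne (by rw [h, mul_zero])
    have hvw : v ≠ w := fun e => (hTns w hwT) (e ▸ hvS)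
    have hlt := (hfvS w hwT v (MvPolynomial.mem_support_iff.mpr hcoef) hvw).2
    exact lo_trans lin hlt (hTlt w hwT)
  · exact (lo_lt_iff lin).mpr ⟨hglead v (MvPolynomial.mem_support_iff.mpr hvg), hvu⟩

end AuxForStatement7

/-- If the standard monomials of `I(𝒱)` are the same family `𝒮` for every lex order, then
every monomial `x^u ∉ 𝒮` admits a polynomial `f = x^u + Σ_{x^v ∈ 𝒮} α_v x^v ∈ I(𝒱)`
which is degree dominated with dominating term `x^u`; in particular every monomial of
`f` divides `x^u` and `lm(f) = x^u` for every term order. -/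
theorem exists_degDominated_standard_representation {n : ℕ} {F : Type*} [Field F]
    (V : Finset (Fin n → F)) (S : Set (Mon n))
    (hS : ∀ (σ : Equiv.Perm (Fin n)) (lin : LinearOrder (Mon n)), IsLexOrder σ lin →
      stdMon lin (vanishIdeal (V : Set (Fin n → F))) = S)
    (u : Mon n) (hu : u ∉ S) :
    ∃ f ∈ vanishIdeal (V : Set (Fin n → F)),
      MvPolynomial.coeff u f = 1 ∧
      (∀ v ∈ f.support, v ≠ u → v ∈ S) ∧
      (∀ v ∈ f.support, v ≤ u) ∧
      (∀ lin : LinearOrder (Mon n), IsTermOrder lin → IsLeadMon lin f u) := by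
  
  classical
  set I := vanishIdeal (V : Set (Fin n → F)) with hI
  have hSeq : ∀ σ : Equiv.Perm (Fin n), stdMon (lexLin σ) I = S :=
    fun σ => hS σ _ (lexLin_isLex σ)
  have hu1 : u ∉ stdMon (lexLin (1 : Equiv.Perm (Fin n))) I := by
    rw [hSeq]; exact hu
  obtain ⟨f, hfI, hfu, hfsup⟩ := lemA_reduce I (lexLin 1) (lexLin_wf 1) u hu1
  have hfS : ∀ v ∈ f.support, v ≠ u → v ∈ S := fun v hv hne =>
    (hSeq 1) ▸ (hfsup v hv hne).1
  have husup : u ∈ f.support :=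
    MvPolynomial.mem_support_iff.mpr (by rw [hfu]; exact one_ne_zero)
  have hf0 : f ≠ 0 := fun h => by
    rw [h] at hfu; simp at hfu
  have hall : ∀ (σ : Equiv.Perm (Fin n)), ∀ v ∈ f.support, (lexLin σ).le v u := by
    intro σ v hv
    obtain ⟨m, hm, hmax⟩ := lo_exists_max (lexLin σ) f.support ⟨u, husup⟩
    have hmu : m = u := by
      by_contra hne
      have hmS : m ∈ S := hfS m hm hne
      have hmstd : m ∈ stdMon (lexLin σ) I := by rw [hSeq σ]; exact hmS
      exact hmstd ⟨f, hfI, hf0, hm, hmax⟩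
    exact hmu ▸ hmax v hv
  have hdvd : ∀ v ∈ f.support, v ≤ u := by
    intro v hv
    rw [Finsupp.le_def]
    intro i
    by_contra hlt
    push_neg at hlt
    set σ : Equiv.Perm (Fin n) := Equiv.swap ⟨0, i.pos⟩ i with hσ
    have hlt2 : (lexLin σ).lt u v := by
      rw [lexLin_isLex σ u v]
      refine ⟨⟨0, i.pos⟩, ?_, fun j hj => absurd (Fin.lt_def.mp hj) (Nat.not_lt_zero _)⟩
      rw [hσ]
      simpa [Equiv.swap_apply_left] using hlt
    exact lo_not_le_of_lt (lexLin σ) hlt2 (hall σ v hv)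
  refine ⟨f, hfI, hfu, hfS, hdvd, ?_⟩
  intro lin hlin
  refine ⟨husup, fun v hv => ?_⟩
  have hle : v ≤ u := hdvd v hv
  have h2 := hlin.2 0 (u - v) v (hlin.1 (u - v))
  rwa [zero_add, tsub_add_cancel_of_le hle] at h2
end
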